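/- arXiv:1410.8632 — 9 statements merged into one kernel-verified Lean document; each statement's English description precedes it below -/
import Mathlib

section
/- Assume that μ_1, …, μ_N generate (ℝ^d)* as a cone. Let τ be an admissible μ-chamber and let b ∈ τ. Then the set of extreme points of the compact convex set P(b) is exactly {s_B(b) : B ∈ 𝓑_τ}. -/
lemma aux_zero {d : ℕ} (S : Set ((Fin d → ℝ) →ₗ[ℝ] ℝ))
    (hS : Submodule.span ℝ S = ⊤) (v : Fin d → ℝ) (hv : ∀ φ ∈ S, φ v = 0) : v = 0 := by
  have hall : ∀ ξ : (Fin d → ℝ) →ₗ[ℝ] ℝ, ξ v = 0 := by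
    intro ξ
    have hξ : ξ ∈ Submodule.span ℝ S := hS ▸ Submodule.mem_top
    induction hξ using Submodule.span_induction with
    | mem φ hφ => exact hv φ hφ
    | zero => simp
    | add φ ψ _ _ h1 h2 => simp [h1, h2]
    | smul c φ _ h => simp [h]
  funext i
  exact hall (LinearMap.proj i)

lemma aux_exists {d : ℕ} (S : Set ((Fin d → ℝ) →ₗ[ℝ] ℝ))
    (hS : Submodule.span ℝ S ≠ ⊤) : ∃ v : Fin d → ℝ, v ≠ 0 ∧ ∀ φ ∈ S, φ v = 0 := by
  by_contra hcon
  push_neg at hcon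
  apply hS
  set W := Submodule.span ℝ S with hW
  set Φ := W.subtype.flip with hΦ
  have hinj : Function.Injective Φ := by
    rw [← LinearMap.ker_eq_bot]
    rw [Submodule.eq_bot_iff]
    intro v hv
    by_contra hv0
    obtain ⟨φ, hφS, hφv⟩ := hcon v hv0
    apply hφv
    have : Φ v = 0 := hv
    have := congrArg (fun f => f ⟨φ, Submodule.subset_span hφS⟩) this
    simpa [hΦ] using this
  have h1 : Module.finrank ℝ (Fin d → ℝ) ≤ Module.finrank ℝ (Module.Dual ℝ W) :=
    LinearMap.finrank_le_finrank_of_injective hinj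
  have h2 : Module.finrank ℝ (Module.Dual ℝ W) = Module.finrank ℝ W :=
    Subspace.dual_finrank_eq (K := ℝ) (V := W)
  have h3 : Module.finrank ℝ (Module.Dual ℝ (Fin d → ℝ)) = Module.finrank ℝ (Fin d → ℝ) :=
    Subspace.dual_finrank_eq
  apply Submodule.eq_top_of_finrank_eq
  have h4 : Module.finrank ℝ W ≤ Module.finrank ℝ ((Fin d → ℝ) →ₗ[ℝ] ℝ) :=
    Submodule.finrank_le W
  have h5 : Module.finrank ℝ (Module.Dual ℝ (Fin d → ℝ))
      = Module.finrank ℝ ((Fin d → ℝ) →ₗ[ℝ] ℝ) := rfl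
  omega

set_option maxHeartbeats 1000000 in
theorem stmt_5
    (d N : ℕ) (hd : 1 ≤ d) (hN : 1 ≤ N)
    (μ : Fin N → ((Fin d → ℝ) →ₗ[ℝ] ℝ))
    -- the μ_j generate the dual space as a cone
    (hgen : ∀ ξ : (Fin d → ℝ) →ₗ[ℝ] ℝ,
      ∃ c : Fin N → ℝ, (∀ j, 0 ≤ c j) ∧ ξ = ∑ j, c j • μ j)
    (P : (Fin N → ℝ) → Set (Fin d → ℝ))
    (hP : ∀ b, P b = {x | ∀ j, μ j x ≤ b j})
    (𝓑 : Set (Finset (Fin N)))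
    (h𝓑 : ∀ B : Finset (Fin N), B ∈ 𝓑 ↔
      (LinearIndependent ℝ (fun j : {j // j ∈ B} => μ j.1) ∧
        Submodule.span ℝ (Set.range (fun j : {j // j ∈ B} => μ j.1)) = ⊤))
    (sB : Finset (Fin N) → ((Fin N → ℝ) →ₗ[ℝ] (Fin d → ℝ)))
    (hsB : ∀ B ∈ 𝓑, ∀ b : Fin N → ℝ, ∀ j ∈ B, μ j (sB B b) = b j)
    (dB : Finset (Fin N) → Set (Fin N → ℝ))
    (hdB : ∀ B, dB B = {b | ∀ k ∉ B, μ k (sB B b) ≤ b k})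
    -- τ is an admissible μ-chamber
    (τ : Set (Fin N → ℝ))
    (hτ : ∃ b₀ ∈ {b : Fin N → ℝ | ∀ B ∈ 𝓑, b ∉ frontier (dB B)},
      τ = connectedComponentIn {b : Fin N → ℝ | ∀ B ∈ 𝓑, b ∉ frontier (dB B)} b₀)
    (hadm : ∀ b ∈ τ, (P b).Nonempty)
    (𝓑τ : Set (Finset (Fin N)))
    (h𝓑τ : ∀ B, B ∈ 𝓑τ ↔ B ∈ 𝓑 ∧ τ ⊆ dB B)
    (b : Fin N → ℝ) (hb : b ∈ τ) :
    -- the extreme points of P(b) are exactly the points s_B(b), B ∈ 𝓑_τ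
    Set.extremePoints ℝ (P b) = {x | ∃ B ∈ 𝓑τ, x = sB B b} := by
  classical
  obtain ⟨b₀, hb₀, hτeq⟩ := hτ
  have hτsub : τ ⊆ {b : Fin N → ℝ | ∀ B ∈ 𝓑, b ∉ frontier (dB B)} :=
    hτeq ▸ connectedComponentIn_subset _ _
  have hτconn : IsPreconnected τ := by
    rw [hτeq]; exact (isConnected_connectedComponentIn_iff.mpr hb₀).isPreconnected
  have hdBclosed : ∀ B, IsClosed (dB B) := by
    intro B
    rw [hdB]
    have heq : {b : Fin N → ℝ | ∀ k ∉ B, μ k (sB B b) ≤ b k}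
        = ⋂ k, ⋂ (_ : k ∉ B), {b : Fin N → ℝ | μ k (sB B b) ≤ b k} := by
      ext c; simp
    rw [heq]
    refine isClosed_iInter fun k => isClosed_iInter fun _ => isClosed_le ?_ ?_
    · exact ((μ k).comp (sB B)).continuous_of_finiteDimensional
    · exact continuous_apply k
  -- key chamber fact
  have hkey : ∀ B ∈ 𝓑, b ∈ dB B → τ ⊆ dB B := by
    intro B hB hbB
    have hbint : b ∈ interior (dB B) := by
      by_contra h
      exact hτsub hb B hB (((hdBclosed B).frontier_eq) ▸ ⟨hbB, h⟩)
    have hsub : τ ⊆ interior (dB B) ∪ (dB B)ᶜ := by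
      intro c hc
      by_cases hcB : c ∈ dB B
      · left
        by_contra h
        exact hτsub hc B hB (((hdBclosed B).frontier_eq) ▸ ⟨hcB, h⟩)
      · right; exact hcB
    have hdisj : Disjoint (interior (dB B)) (dB B)ᶜ :=
      (disjoint_compl_right).mono_left interior_subset
    have := hτconn.subset_left_of_subset_union isOpen_interior
      (hdBclosed B).isOpen_compl hdisj hsub ⟨b, hb, hbint⟩
    exact this.trans interior_subset
  -- span of image over a Finset
  have hrange : ∀ B : Finset (Fin N),
      Set.range (fun j : {j // j ∈ B} => μ j.1) = μ '' ↑B := by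
    intro B
    ext φ
    constructor
    · rintro ⟨⟨j, hj⟩, rfl⟩; exact ⟨j, hj, rfl⟩
    · rintro ⟨j, hj, rfl⟩; exact ⟨⟨j, hj⟩, rfl⟩
  ext x
  simp only [Set.mem_setOf_eq]
  constructor
  · -- extreme point ⇒ vertex
    intro hx
    obtain ⟨hxP, hxext⟩ := mem_extremePoints.mp hx
    rw [hP] at hxP
    simp only [Set.mem_setOf_eq] at hxP
    -- the tight functionals span
    have hspan : Submodule.span ℝ (μ '' {j | μ j x = b j}) = ⊤ := by
      by_contra hne
      obtain ⟨v, hv0, hvS⟩ := aux_exists _ hne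
      have hvT : ∀ j, μ j x = b j → μ j v = 0 := fun j hj => hvS _ ⟨j, hj, rfl⟩
      haveI : Nonempty (Fin N) := ⟨⟨0, hN⟩⟩
      set g : Fin N → ℝ := fun k =>
        if μ k x < b k then (b k - μ k x) / (|μ k v| + 1) else 1 with hg
      have hgpos : ∀ k, 0 < g k := by
        intro k
        by_cases hk : μ k x < b k
        · rw [hg]; dsimp only; rw [if_pos hk]
          exact div_pos (by linarith) (by positivity)
        · rw [hg]; dsimp only; rw [if_neg hk]; exact one_pos
      have hNE : (Finset.univ : Finset (Fin N)).Nonempty := Finset.univ_nonempty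
      set ε := Finset.univ.inf' hNE g with hε
      have hεpos : 0 < ε := by
        rw [hε, Finset.lt_inf'_iff]
        intro k _
        exact hgpos k
      have hεle : ∀ k, ε * |μ k v| ≤ g k * (|μ k v| + 1) := by
        intro k
        exact mul_le_mul (Finset.inf'_le _ (Finset.mem_univ k))
          (by linarith [abs_nonneg (μ k v)]) (abs_nonneg _) (hgpos k).le
      have hslack : ∀ k, μ k x < b k → ε * |μ k v| ≤ b k - μ k x := by
        intro k hk
        have := hεle k
        have hgk : g k * (|μ k v| + 1) = b k - μ k x := by
          rw [hg]
          dsimp only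
          rw [if_pos hk]
          field_simp
        linarith
      have hy : x + ε • v ∈ P b := by
        rw [hP]
        intro j
        have : μ j (x + ε • v) = μ j x + ε * μ j v := by
          simp [map_add, map_smul, smul_eq_mul]
        rw [this]
        by_cases hj : μ j x = b j
        · rw [hvT j hj]; simpa using hj.le
        · have hlt : μ j x < b j := lt_of_le_of_ne (hxP j) hj
          have h1 : ε * μ j v ≤ ε * |μ j v| :=
            mul_le_mul_of_nonneg_left (le_abs_self _) hεpos.le
          linarith [hslack j hlt]
      have hz : x - ε • v ∈ P b := by
        rw [hP]
        intro j
        have : μ j (x - ε • v) = μ j x - ε * μ j v := by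
          simp [map_sub, map_smul, smul_eq_mul]
        rw [this]
        by_cases hj : μ j x = b j
        · rw [hvT j hj]; simpa using hj.le
        · have hlt : μ j x < b j := lt_of_le_of_ne (hxP j) hj
          have h1 : -(ε * μ j v) ≤ ε * |μ j v| := by
            rw [← mul_neg]
            exact mul_le_mul_of_nonneg_left (neg_le_abs _) hεpos.le
          linarith [hslack j hlt]
      have hseg : x ∈ openSegment ℝ (x + ε • v) (x - ε • v) := by
        refine ⟨1/2, 1/2, by norm_num, by norm_num, by norm_num, ?_⟩
        module
      have := (hxext _ hy _ hz hseg).1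
      have hεv : ε • v = 0 := by
        have := congrArg (fun w => w - x) this
        simpa using this
      rcases smul_eq_zero.mp hεv with h | h
      · exact absurd h hεpos.ne'
      · exact hv0 h
    -- extract a basis
    obtain ⟨S₀, hS₀sub, hS₀span, hS₀ind⟩ :=
      exists_linearIndependent ℝ (μ '' {j | μ j x = b j})
    rw [hspan] at hS₀span
    have hS₀fin : S₀.Finite :=
      ((Set.toFinite {j | μ j x = b j}).image μ).subset hS₀sub
    have hpick : ∀ φ ∈ S₀, ∃ j, μ j x = b j ∧ μ j = φ := by
      intro φ hφ
      obtain ⟨j, hj, rfl⟩ := hS₀sub hφ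
      exact ⟨j, hj, rfl⟩
    haveI : Inhabited (Fin N) := ⟨⟨0, hN⟩⟩
    set g : ((Fin d → ℝ) →ₗ[ℝ] ℝ) → Fin N := fun φ =>
      if h : ∃ j, μ j x = b j ∧ μ j = φ then h.choose else default with hgdef
    have hgspec : ∀ φ ∈ S₀, μ (g φ) x = b (g φ) ∧ μ (g φ) = φ := by
      intro φ hφ
      have h := hpick φ hφ
      rw [hgdef]
      dsimp only
      rw [dif_pos h]
      exact h.choose_spec
    set B : Finset (Fin N) := hS₀fin.toFinset.image g with hBdef
    have hmemB : ∀ j ∈ B, μ j ∈ S₀ ∧ μ j x = b j ∧ g (μ j) = j := by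
      intro j hj
      rw [hBdef, Finset.mem_image] at hj
      obtain ⟨φ, hφ, rfl⟩ := hj
      rw [Set.Finite.mem_toFinset] at hφ
      obtain ⟨h1, h2⟩ := hgspec φ hφ
      exact ⟨by rw [h2]; exact hφ, h1, by rw [h2]⟩
    have himg : μ '' ↑B = S₀ := by
      ext φ
      constructor
      · rintro ⟨j, hj, rfl⟩
        exact (hmemB j hj).1
      · intro hφ
        refine ⟨g φ, ?_, (hgspec φ hφ).2⟩
        rw [hBdef]
        simp only [Finset.coe_image, Set.mem_image]
        exact ⟨φ, by rwa [Set.Finite.coe_toFinset], rfl⟩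
    have hB𝓑 : B ∈ 𝓑 := by
      rw [h𝓑]
      constructor
      · -- linear independence
        have einj : Function.Injective
            (fun j : {j // j ∈ B} => (⟨μ j.1, (hmemB j.1 j.2).1⟩ : S₀)) := by
          rintro ⟨j, hj⟩ ⟨j', hj'⟩ h
          have : μ j = μ j' := congrArg Subtype.val h
          have e1 := (hmemB j hj).2.2
          have e2 := (hmemB j' hj').2.2
          ext
          dsimp
          rw [← e1, ← e2, this]
        exact hS₀ind.comp _ einj
      · rw [hrange B, himg, hS₀span]
    have hspanB : Submodule.span ℝ (μ '' ↑B) = ⊤ := by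
      rw [himg, hS₀span]
    have hxeq : x = sB B b := by
      have h0 : x - sB B b = 0 := by
        apply aux_zero _ hspanB
        rintro φ ⟨j, hj, rfl⟩
        rw [map_sub, hsB B hB𝓑 b j hj, (hmemB j hj).2.1, sub_self]
      have := sub_eq_zero.mp h0
      exact this
    refine ⟨B, ?_, hxeq⟩
    rw [h𝓑τ]
    refine ⟨hB𝓑, hkey B hB𝓑 ?_⟩
    rw [hdB]
    intro k _
    rw [← hxeq]
    exact hxP k
  · -- vertex ⇒ extreme point
    rintro ⟨B, hBτ, rfl⟩
    obtain ⟨hB𝓑, hτdB⟩ := (h𝓑τ B).mp hBτ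
    have hbdB := hτdB hb
    rw [hdB] at hbdB
    have hspanB : Submodule.span ℝ (μ '' ↑B) = ⊤ := by
      rw [← hrange B]
      exact ((h𝓑 B).mp hB𝓑).2
    have hmem : sB B b ∈ P b := by
      rw [hP]
      intro j
      by_cases hj : j ∈ B
      · exact (hsB B hB𝓑 b j hj).le
      · exact hbdB j hj
    refine mem_extremePoints.mpr ⟨hmem, ?_⟩
    intro x₁ hx₁ x₂ hx₂ hseg
    obtain ⟨a, c, ha, hc, hac, heq⟩ := hseg
    rw [hP] at hx₁ hx₂
    simp only [Set.mem_setOf_eq] at hx₁ hx₂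
    have htight : ∀ j ∈ B, μ j x₁ = b j ∧ μ j x₂ = b j := by
      intro j hj
      have h1 : μ j x₁ ≤ b j := hx₁ j
      have h2 : μ j x₂ ≤ b j := hx₂ j
      have hsum : a * μ j x₁ + c * μ j x₂ = b j := by
        have := congrArg (μ j) heq
        simp only [map_add, map_smul, smul_eq_mul] at this
        rw [this, hsB B hB𝓑 b j hj]
      have hbj : a * b j + c * b j = b j := by rw [← add_mul, hac, one_mul]
      constructor
      · by_contra h
        have hlt : μ j x₁ < b j := lt_of_le_of_ne h1 h
        have hA := mul_lt_mul_of_pos_left hlt ha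
        have hB := mul_le_mul_of_nonneg_left h2 hc.le
        linarith
      · by_contra h
        have hlt : μ j x₂ < b j := lt_of_le_of_ne h2 h
        have hA := mul_lt_mul_of_pos_left hlt hc
        have hB := mul_le_mul_of_nonneg_left h1 ha.le
        linarith
    have heq1 : x₁ = sB B b := by
      have h0 : x₁ - sB B b = 0 := by
        apply aux_zero _ hspanB
        rintro φ ⟨j, hj, rfl⟩
        rw [map_sub, hsB B hB𝓑 b j hj, (htight j hj).1, sub_self]
      exact sub_eq_zero.mp h0
    have heq2 : x₂ = sB B b := by
      have h0 : x₂ - sB B b = 0 := by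
        apply aux_zero _ hspanB
        rintro φ ⟨j, hj, rfl⟩
        rw [map_sub, hsB B hB𝓑 b j hj, (htight j hj).2, sub_self]
      exact sub_eq_zero.mp h0
    exact ⟨heq1, heq2⟩
end

section
/- Let τ be a μ-chamber, let b ∈ τ, and let B ∈ 𝓑_τ. Then the set of active constraints at the point s_B(b) is exactly B, that is: {j ∈ {1, …, N} : ⟨μ_j, s_B(b)⟩ = b_j} = B. (In particular, for b in an open chamber the vertex s_B(b) of P(b) lies on exactly the d facet hyperplanes indexed by B, so P(b) is a simple polytope.) -/
theorem stmt_6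
    (d N : ℕ) (hd : 1 ≤ d) (hN : 1 ≤ N)
    (μ : Fin N → ((Fin d → ℝ) →ₗ[ℝ] ℝ))
    (P : (Fin N → ℝ) → Set (Fin d → ℝ))
    (hP : ∀ b, P b = {x | ∀ j, μ j x ≤ b j})
    (𝓑 : Set (Finset (Fin N)))
    (h𝓑 : ∀ B : Finset (Fin N), B ∈ 𝓑 ↔
      (LinearIndependent ℝ (fun j : {j // j ∈ B} => μ j.1) ∧
        Submodule.span ℝ (Set.range (fun j : {j // j ∈ B} => μ j.1)) = ⊤))
    (sB : Finset (Fin N) → ((Fin N → ℝ) →ₗ[ℝ] (Fin d → ℝ)))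
    (hsB : ∀ B ∈ 𝓑, ∀ b : Fin N → ℝ, ∀ j ∈ B, μ j (sB B b) = b j)
    (dB : Finset (Fin N) → Set (Fin N → ℝ))
    (hdB : ∀ B, dB B = {b | ∀ k ∉ B, μ k (sB B b) ≤ b k})
    -- τ is a μ-chamber
    (τ : Set (Fin N → ℝ))
    (hτ : ∃ b₀ ∈ {b : Fin N → ℝ | ∀ B ∈ 𝓑, b ∉ frontier (dB B)},
      τ = connectedComponentIn {b : Fin N → ℝ | ∀ B ∈ 𝓑, b ∉ frontier (dB B)} b₀)
    (𝓑τ : Set (Finset (Fin N)))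
    (h𝓑τ : ∀ B, B ∈ 𝓑τ ↔ B ∈ 𝓑 ∧ τ ⊆ dB B)
    (b : Fin N → ℝ) (hb : b ∈ τ)
    (B : Finset (Fin N)) (hB : B ∈ 𝓑τ) :
    -- the active constraints at s_B(b) are exactly those indexed by B
    {j : Fin N | μ j (sB B b) = b j} = (↑B : Set (Fin N)) := by
  obtain ⟨hB𝓑, hτsub⟩ := (h𝓑τ B).1 hB
  obtain ⟨hind, hspan⟩ := (h𝓑 B).1 hB𝓑
  -- b is not on the frontier of dB B
  obtain ⟨b₀, hb₀S, hτeq⟩ := hτ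
  have hbS : b ∈ {b : Fin N → ℝ | ∀ B ∈ 𝓑, b ∉ frontier (dB B)} := by
    have := connectedComponentIn_subset
      {b : Fin N → ℝ | ∀ B ∈ 𝓑, b ∉ frontier (dB B)} b₀
    exact this (hτeq ▸ hb)
  have hbnf : b ∉ frontier (dB B) := hbS B hB𝓑
  have hbd : b ∈ dB B := hτsub hb
  have hbint : b ∈ interior (dB B) := by
    by_contra h
    exact hbnf ⟨subset_closure hbd, h⟩
  ext j
  simp only [Set.mem_setOf_eq, Finset.coe_sort_coe, Finset.mem_coe]
  constructor
  · intro hj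
    by_contra hjB
    -- sB B kills Pi.single j 1
    set v : Fin N → ℝ := Pi.single j 1 with hv
    have hker : ∀ ℓ : (Fin d → ℝ) →ₗ[ℝ] ℝ, ℓ (sB B v) = 0 := by
      intro ℓ
      have hℓ : ℓ ∈ Submodule.span ℝ
          (Set.range (fun j : {j // j ∈ B} => μ j.1)) := by
        rw [hspan]; exact Submodule.mem_top
      induction hℓ using Submodule.span_induction with
      | mem x hx =>
        obtain ⟨⟨i, hi⟩, rfl⟩ := hx
        have hne : j ≠ i := fun h => hjB (h ▸ hi)
        have := hsB B hB𝓑 v i hi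
        rw [this, hv, Pi.single_eq_of_ne' hne]
      | zero => simp
      | add x y _ _ hx hy => simp [hx, hy]
      | smul c x _ hx => simp [hx]
    have hsv : sB B v = 0 := by
      funext i
      have := hker (LinearMap.proj i)
      simpa using this
    -- use the interior to move b in the -v direction
    rcases Metric.isOpen_iff.mp isOpen_interior b hbint with ⟨ε, hε, hball⟩
    have hvnorm : ‖v‖ = 1 := by
      rw [hv]
      simpa using (Pi.norm_single (G := fun _ : Fin N => ℝ) (i := j) (1:ℝ))
    set b' : Fin N → ℝ := b - (ε/2) • v with hb'
    have hb'mem : b' ∈ dB B := by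
      apply interior_subset
      apply hball
      have : dist b' b = ε / 2 := by
        rw [hb', dist_eq_norm]
        simp [norm_smul, hvnorm, abs_of_pos hε]
      rw [Metric.mem_ball, this]
      linarith
    rw [hdB] at hb'mem
    have hineq := hb'mem j hjB
    have hsb' : sB B b' = sB B b := by
      rw [hb']
      simp [map_sub, map_smul, hsv]
    rw [hsb', hj] at hineq
    have hb'j : b' j = b j - ε/2 := by
      rw [hb']
      simp [hv, Pi.single_eq_same]
    rw [hb'j] at hineq
    linarith
  · intro hj
    exact hsB B hB𝓑 b j hj
end

section
/- Let τ be a μ-chamber, let b ∈ τ, and let B ∈ 𝓑_τ. Then the cone of feasible directions of P(b) at the vertex s_B(b) equals c_B; that is, {v ∈ ℝ^d : there exists ε > 0 with s_B(b) + ε·v ∈ P(b)} = {x ∈ ℝ^d : ⟨μ_j, x⟩ ≤ 0 for all j ∈ B}. In particular, this cone depends only on B and not on b ∈ τ. -/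
theorem stmt_7
    (d N : ℕ) (hd : 1 ≤ d) (hN : 1 ≤ N)
    (μ : Fin N → ((Fin d → ℝ) →ₗ[ℝ] ℝ))
    (P : (Fin N → ℝ) → Set (Fin d → ℝ))
    (hP : ∀ b, P b = {x | ∀ j, μ j x ≤ b j})
    (𝓑 : Set (Finset (Fin N)))
    (h𝓑 : ∀ B : Finset (Fin N), B ∈ 𝓑 ↔
      (LinearIndependent ℝ (fun j : {j // j ∈ B} => μ j.1) ∧
        Submodule.span ℝ (Set.range (fun j : {j // j ∈ B} => μ j.1)) = ⊤))
    (sB : Finset (Fin N) → ((Fin N → ℝ) →ₗ[ℝ] (Fin d → ℝ)))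
    (hsB : ∀ B ∈ 𝓑, ∀ b : Fin N → ℝ, ∀ j ∈ B, μ j (sB B b) = b j)
    (dB : Finset (Fin N) → Set (Fin N → ℝ))
    (hdB : ∀ B, dB B = {b | ∀ k ∉ B, μ k (sB B b) ≤ b k})
    -- τ is a μ-chamber
    (τ : Set (Fin N → ℝ))
    (hτ : ∃ b₀ ∈ {b : Fin N → ℝ | ∀ B ∈ 𝓑, b ∉ frontier (dB B)},
      τ = connectedComponentIn {b : Fin N → ℝ | ∀ B ∈ 𝓑, b ∉ frontier (dB B)} b₀)
    (𝓑τ : Set (Finset (Fin N)))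
    (h𝓑τ : ∀ B, B ∈ 𝓑τ ↔ B ∈ 𝓑 ∧ τ ⊆ dB B)
    (b : Fin N → ℝ) (hb : b ∈ τ)
    (B : Finset (Fin N)) (hB : B ∈ 𝓑τ) :
    -- the cone of feasible directions of P(b) at the vertex s_B(b) equals c_B
    {v : Fin d → ℝ | ∃ ε : ℝ, 0 < ε ∧ sB B b + ε • v ∈ P b} =
      {x : Fin d → ℝ | ∀ j ∈ B, μ j x ≤ 0} := by
  obtain ⟨b₀, hb₀, hτeq⟩ := hτ
  obtain ⟨hB𝓑, hτd⟩ := (h𝓑τ B).1 hB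
  obtain ⟨hind, hspan⟩ := (h𝓑 B).1 hB𝓑
  have hbS : b ∈ {b : Fin N → ℝ | ∀ B ∈ 𝓑, b ∉ frontier (dB B)} := by
    have h1 := connectedComponentIn_subset
      {b : Fin N → ℝ | ∀ B ∈ 𝓑, b ∉ frontier (dB B)} b₀
    rw [← hτeq] at h1
    exact h1 hb
  have hbfront : b ∉ frontier (dB B) := hbS B hB𝓑
  have hbdB : b ∈ dB B := hτd hb
  have hbint : b ∈ interior (dB B) := by
    by_contra h
    exact hbfront ⟨subset_closure hbdB, h⟩
  -- strict inequalities for k ∉ B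
  have hstrict : ∀ k ∉ B, μ k (sB B b) < b k := by
    intro k hk
    by_contra h
    push_neg at h
    have hle : μ k (sB B b) ≤ b k := by
      rw [hdB] at hbdB; exact hbdB k hk
    have heq : μ k (sB B b) = b k := le_antisymm hle h
    set ek : Fin N → ℝ := Pi.single k 1 with hek
    -- μ k (sB B ek) = 0 since μ_j, j∈B, span the dual and kill it
    have hkill : ∀ j ∈ B, μ j (sB B ek) = 0 := by
      intro j hj
      rw [hsB B hB𝓑 _ j hj, hek, Pi.single_apply, if_neg]
      intro hjk; exact hk (hjk ▸ hj)
    have hx0 : μ k (sB B ek) = 0 := by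
      have hmem : μ k ∈ Submodule.span ℝ
          (Set.range (fun j : {j // j ∈ B} => μ j.1)) := by
        rw [hspan]; exact Submodule.mem_top
      refine Submodule.span_induction
        (p := fun φ _ => φ (sB B ek) = 0) ?_ ?_ ?_ ?_ hmem
      · rintro φ ⟨j, rfl⟩; exact hkill j.1 j.2
      · simp
      · intro φ ψ _ _ hφ hψ; simp [hφ, hψ]
      · intro a φ _ hφ; simp [hφ]
    -- move slightly inside: b - t • e_k ∈ dB B for some t > 0
    have hcontv : Continuous (fun t : ℝ => b - t • (ek)) :=
      continuous_const.sub (continuous_id.smul continuous_const)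
    have htend : Filter.Tendsto (fun t : ℝ => b - t • ek)
        (nhdsWithin 0 (Set.Ioi 0)) (nhds b) := by
      have h2 := hcontv.tendsto 0
      simp only [zero_smul, sub_zero] at h2
      exact h2.mono_left nhdsWithin_le_nhds
    have hev := htend.eventually (isOpen_interior.mem_nhds hbint)
    obtain ⟨t, htmem, ht⟩ := (hev.and self_mem_nhdsWithin).exists
    have h3 : b - t • ek ∈ dB B := interior_subset (by exact htmem)
    rw [hdB] at h3
    have h4 := h3 k hk
    have h5 : μ k (sB B (b - t • ek))
        = μ k (sB B b) - t * μ k (sB B ek) := by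
      simp [map_sub, map_smul]
    rw [h5, hx0, heq] at h4
    simp [hek, Pi.single_apply] at h4
    linarith
  ext v
  simp only [Set.mem_setOf_eq]
  constructor
  · rintro ⟨ε, hε, hv⟩ j hj
    rw [hP] at hv
    have h1 := hv j
    simp only [Set.mem_setOf_eq, map_add, map_smul, smul_eq_mul] at h1
    rw [hsB B hB𝓑 b j hj] at h1
    nlinarith
  · intro hv
    haveI : Nonempty (Fin N) := ⟨⟨0, hN⟩⟩
    set g : Fin N → ℝ := fun k =>
      if k ∈ B then 1 else
        (if μ k v ≤ 0 then 1 else (b k - μ k (sB B b)) / (μ k v)) with hg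
    have hgpos : ∀ k, 0 < g k := by
      intro k
      rw [hg]
      by_cases hk : k ∈ B
      · simp [hk]
      · simp only [hk, if_false]
        by_cases hkv : μ k v ≤ 0
        · simp [hkv]
        · push_neg at hkv
          rw [if_neg (not_le.mpr hkv)]
          exact div_pos (by linarith [hstrict k hk]) hkv
    set ε : ℝ := Finset.univ.inf' Finset.univ_nonempty g with hε
    have hεpos : 0 < ε := by
      rw [hε, Finset.lt_inf'_iff]
      intro k _; exact hgpos k
    refine ⟨ε, hεpos, ?_⟩
    rw [hP]
    intro j
    simp only [Set.mem_setOf_eq, map_add, map_smul, smul_eq_mul]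
    have hεle : ε ≤ g j := Finset.inf'_le g (Finset.mem_univ j)
    by_cases hj : j ∈ B
    · rw [hsB B hB𝓑 b j hj]
      nlinarith [hv j hj]
    · have hs := hstrict j hj
      rw [hg] at hεle
      simp only [hj, if_false] at hεle
      by_cases hjv : μ j v ≤ 0
      · nlinarith
      · push_neg at hjv
        rw [if_neg (not_le.mpr hjv)] at hεle
        have := (le_div_iff₀ hjv).1 hεle
        linarith
end

section
/- Assume that μ_1, …, μ_N generate (ℝ^d)* as a cone. Let τ be an admissible μ-chamber, let b ∈ τ, and let j ∈ {1, …, N}. Then the hyperplane {x : ⟨μ_j, x⟩ = b_j} is a wall of P(b) — i.e., the set P(b) ∩ {x ∈ ℝ^d : ⟨μ_j, x⟩ = b_j} contains d affinely independent points (equivalently, its affine span has dimension d − 1) — if and only if j belongs to some B ∈ 𝓑_τ. -/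
open Module Set

/-- If the `μ k`, `k ∈ B`, span the dual space and agree on `x` and `y`, then `x = y`. -/
lemma aux_eq_of_agree {d N : ℕ} (μ : Fin N → ((Fin d → ℝ) →ₗ[ℝ] ℝ))
    (B : Finset (Fin N))
    (hspan : Submodule.span ℝ (Set.range (fun j : {j // j ∈ B} => μ j.1)) = ⊤)
    {x y : Fin d → ℝ} (h : ∀ k ∈ B, μ k x = μ k y) : x = y := by
  have hker : Submodule.span ℝ (Set.range (fun j : {j // j ∈ B} => μ j.1))
      ≤ LinearMap.ker (Module.Dual.eval ℝ (Fin d → ℝ) (x - y)) := by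
    rw [Submodule.span_le]
    rintro _ ⟨k, rfl⟩
    simp only [SetLike.mem_coe, LinearMap.mem_ker, map_sub, LinearMap.sub_apply,
      Module.Dual.eval_apply]
    rw [h k.1 k.2, sub_self]
  rw [hspan, top_le_iff] at hker
  have h0 : ∀ φ : Module.Dual ℝ (Fin d → ℝ), φ (x - y) = 0 := by
    intro φ
    have : φ ∈ LinearMap.ker (Module.Dual.eval ℝ (Fin d → ℝ) (x - y)) := by
      rw [hker]; trivial
    simpa using this
  exact sub_eq_zero.mp ((Module.forall_dual_apply_eq_zero_iff ℝ (x - y)).mp h0)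

set_option maxHeartbeats 1000000 in
/-- From a spanning active set `A` containing `j` with `μ j ≠ 0`, select a basis subset
containing `j`. -/
lemma aux_select {d N : ℕ} (μ : Fin N → ((Fin d → ℝ) →ₗ[ℝ] ℝ)) (A : Finset (Fin N))
    (hspan : Submodule.span ℝ (μ '' ↑A) = ⊤) (j : Fin N) (hj : j ∈ A) (hμj : μ j ≠ 0) :
    ∃ B : Finset (Fin N), B ⊆ A ∧ j ∈ B ∧
      LinearIndependent ℝ (fun k : {k // k ∈ B} => μ k.1) ∧
      Submodule.span ℝ (Set.range (fun k : {k // k ∈ B} => μ k.1)) = ⊤ := by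
  classical
  have hsing : LinearIndepOn ℝ id ({μ j} : Set ((Fin d → ℝ) →ₗ[ℝ] ℝ)) :=
    (linearIndepOn_singleton_iff ℝ).2 hμj
  have hsub : ({μ j} : Set ((Fin d → ℝ) →ₗ[ℝ] ℝ)) ⊆ μ '' ↑A :=
    Set.singleton_subset_iff.mpr ⟨j, hj, rfl⟩
  have htsub : hsing.extend hsub ⊆ μ '' ↑A := hsing.extend_subset hsub
  have htj : μ j ∈ hsing.extend hsub := hsing.subset_extend hsub rfl
  have htli : LinearIndependent ℝ ((↑) : hsing.extend hsub → ((Fin d → ℝ) →ₗ[ℝ] ℝ)) :=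
    hsing.linearIndepOn_extend hsub
  have htspan : Submodule.span ℝ (hsing.extend hsub) = ⊤ := by
    rw [eq_top_iff, ← hspan]
    exact Submodule.span_le.2 (hsing.subset_span_extend hsub)
  set t := hsing.extend hsub with ht
  have htfin : t.Finite := htli.setFinite
  have hsel : ∀ ξ : (Fin d → ℝ) →ₗ[ℝ] ℝ, ∃ k : Fin N,
      ξ ∈ t → (k ∈ A ∧ μ k = ξ ∧ (ξ = μ j → k = j)) := by
    intro ξ
    by_cases hξ : ξ ∈ t
    · by_cases hξj : ξ = μ j
      · exact ⟨j, fun _ => ⟨hj, hξj.symm, fun _ => rfl⟩⟩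
      · obtain ⟨k, hkA, hkξ⟩ := htsub hξ
        exact ⟨k, fun _ => ⟨hkA, hkξ, fun h => absurd h hξj⟩⟩
    · exact ⟨j, fun h => absurd h hξ⟩
  choose g hg using hsel
  refine ⟨htfin.toFinset.image g, ?_, ?_, ?_, ?_⟩
  · intro k hk
    obtain ⟨ξ, hξ, rfl⟩ := Finset.mem_image.1 hk
    exact (hg ξ (htfin.mem_toFinset.1 hξ)).1
  · exact Finset.mem_image.2 ⟨μ j, htfin.mem_toFinset.2 htj, (hg (μ j) htj).2.2 rfl⟩
  · have hμt : ∀ k : {k // k ∈ htfin.toFinset.image g}, μ k.1 ∈ t := by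
      rintro ⟨k, hk⟩
      obtain ⟨ξ, hξ, rfl⟩ := Finset.mem_image.1 hk
      have hξt := htfin.mem_toFinset.1 hξ
      rw [(hg ξ hξt).2.1]; exact hξt
    have hφinj : Function.Injective
        (fun k : {k // k ∈ htfin.toFinset.image g} => (⟨μ k.1, hμt k⟩ : t)) := by
      rintro ⟨k1, h1⟩ ⟨k2, h2⟩ h
      obtain ⟨ξ1, hξ1, rfl⟩ := Finset.mem_image.1 h1
      obtain ⟨ξ2, hξ2, rfl⟩ := Finset.mem_image.1 h2
      have e1 := (hg ξ1 (htfin.mem_toFinset.1 hξ1)).2.1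
      have e2 := (hg ξ2 (htfin.mem_toFinset.1 hξ2)).2.1
      have hμeq : μ (g ξ1) = μ (g ξ2) := congrArg Subtype.val h
      have hξeq : ξ1 = ξ2 := by rw [← e1, ← e2]; exact hμeq
      exact Subtype.ext (congrArg g hξeq)
    exact htli.comp _ hφinj
  · rw [eq_top_iff, ← htspan]
    apply Submodule.span_mono
    intro ξ hξ
    have hgB : g ξ ∈ htfin.toFinset.image g :=
      Finset.mem_image.2 ⟨ξ, htfin.mem_toFinset.2 hξ, rfl⟩
    exact ⟨⟨g ξ, hgB⟩, (hg ξ hξ).2.1⟩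

set_option maxHeartbeats 1000000 in
theorem stmt_8
    (d N : ℕ) (hd : 1 ≤ d) (hN : 1 ≤ N)
    (μ : Fin N → ((Fin d → ℝ) →ₗ[ℝ] ℝ))
    -- the μ_j generate the dual space as a cone
    (hgen : ∀ ξ : (Fin d → ℝ) →ₗ[ℝ] ℝ,
      ∃ c : Fin N → ℝ, (∀ j, 0 ≤ c j) ∧ ξ = ∑ j, c j • μ j)
    (P : (Fin N → ℝ) → Set (Fin d → ℝ))
    (hP : ∀ b, P b = {x | ∀ j, μ j x ≤ b j})
    (𝓑 : Set (Finset (Fin N)))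
    (h𝓑 : ∀ B : Finset (Fin N), B ∈ 𝓑 ↔
      (LinearIndependent ℝ (fun j : {j // j ∈ B} => μ j.1) ∧
        Submodule.span ℝ (Set.range (fun j : {j // j ∈ B} => μ j.1)) = ⊤))
    (sB : Finset (Fin N) → ((Fin N → ℝ) →ₗ[ℝ] (Fin d → ℝ)))
    (hsB : ∀ B ∈ 𝓑, ∀ b : Fin N → ℝ, ∀ j ∈ B, μ j (sB B b) = b j)
    (dB : Finset (Fin N) → Set (Fin N → ℝ))
    (hdB : ∀ B, dB B = {b | ∀ k ∉ B, μ k (sB B b) ≤ b k})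
    -- τ is an admissible μ-chamber
    (τ : Set (Fin N → ℝ))
    (hτ : ∃ b₀ ∈ {b : Fin N → ℝ | ∀ B ∈ 𝓑, b ∉ frontier (dB B)},
      τ = connectedComponentIn {b : Fin N → ℝ | ∀ B ∈ 𝓑, b ∉ frontier (dB B)} b₀)
    (hadm : ∀ b ∈ τ, (P b).Nonempty)
    (𝓑τ : Set (Finset (Fin N)))
    (h𝓑τ : ∀ B, B ∈ 𝓑τ ↔ B ∈ 𝓑 ∧ τ ⊆ dB B)
    (b : Fin N → ℝ) (hb : b ∈ τ) (j : Fin N) :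
    -- the hyperplane ⟨μ_j, x⟩ = b_j is a wall of P(b) iff j belongs to some B ∈ 𝓑_τ
    (∃ p : Fin d → (Fin d → ℝ),
        (∀ i, p i ∈ P b ∧ μ j (p i) = b j) ∧ AffineIndependent ℝ p) ↔
      ∃ B ∈ 𝓑τ, j ∈ B := by
    classical
  -- basic facts about τ
  have hτS : τ ⊆ {b : Fin N → ℝ | ∀ B ∈ 𝓑, b ∉ frontier (dB B)} := by
    obtain ⟨b₀, _, rfl⟩ := hτ
    exact connectedComponentIn_subset _ _
  have hτconn : IsPreconnected τ := by
    obtain ⟨b₀, _, rfl⟩ := hτ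
    exact isPreconnected_connectedComponentIn
  have hdBclosed : ∀ B, IsClosed (dB B) := by
    intro B
    rw [hdB]
    have : {b : Fin N → ℝ | ∀ k ∉ B, μ k (sB B b) ≤ b k}
        = ⋂ k, {b : Fin N → ℝ | k ∉ B → μ k (sB B b) ≤ b k} := by
      ext x; simp [Set.mem_iInter]
    rw [this]
    refine isClosed_iInter fun k => ?_
    by_cases hk : k ∈ B
    · have : {b : Fin N → ℝ | k ∉ B → μ k (sB B b) ≤ b k} = Set.univ := by
        ext x; simp [hk]
      rw [this]; exact isClosed_univ
    · have : {b : Fin N → ℝ | k ∉ B → μ k (sB B b) ≤ b k}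
          = {b : Fin N → ℝ | μ k (sB B b) ≤ b k} := by
        ext x; simp [hk]
      rw [this]
      exact isClosed_le (((μ k).comp (sB B)).continuous_of_finiteDimensional)
        (continuous_apply k)
  -- strictness of inactive constraints at chamber points
  have hstrict : ∀ B ∈ 𝓑, b ∈ dB B → ∀ k ∉ B, μ k (sB B b) < b k := by
    intro B hB hbd k hk
    obtain ⟨hBli, hBspan⟩ := (h𝓑 B).1 hB
    have hle : μ k (sB B b) ≤ b k := by rw [hdB] at hbd; exact hbd k hk
    rcases lt_or_eq_of_le hle with h | h
    · exact h
    exfalso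
    have hμs0 : sB B ((Pi.single k 1 : Fin N → ℝ)) = 0 := by
      refine aux_eq_of_agree μ B hBspan fun l hl => ?_
      rw [hsB B hB _ l hl, map_zero]
      exact Pi.single_eq_of_ne (fun he : l = k => hk (he ▸ hl)) 1
    have hnotin : ∀ ε : ℝ, 0 < ε → (b - ε • (Pi.single k 1 : Fin N → ℝ)) ∉ dB B := by
      intro ε hε hmem
      rw [hdB] at hmem
      have h2 := hmem k hk
      rw [map_sub, map_smul, hμs0, smul_zero, sub_zero] at h2
      have h3 : (b - ε • (Pi.single k 1 : Fin N → ℝ)) k = b k - ε := by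
        simp [Pi.single_eq_same]
      rw [h3, ← h] at h2
      linarith
    have hcl : b ∈ closure (dB B)ᶜ := by
      have htend : Filter.Tendsto (fun ε : ℝ => b - ε • (Pi.single k 1 : Fin N → ℝ))
          (nhdsWithin 0 (Set.Ioi 0)) (nhds b) := by
        have h1 : Filter.Tendsto (fun ε : ℝ => b - ε • (Pi.single k 1 : Fin N → ℝ)) (nhds 0)
            (nhds (b - (0 : ℝ) • (Pi.single k 1 : Fin N → ℝ))) :=
          Filter.Tendsto.sub tendsto_const_nhds (Filter.Tendsto.smul Filter.tendsto_id tendsto_const_nhds)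
        simpa using h1.mono_left nhdsWithin_le_nhds
      exact mem_closure_of_tendsto htend
        (by filter_upwards [self_mem_nhdsWithin] with ε hε using hnotin ε hε)
    have hfr : b ∈ frontier (dB B) := by
      rw [frontier_eq_closure_inter_closure]
      exact ⟨subset_closure hbd, hcl⟩
    exact hτS hb B hB hfr
  -- monotonicity: if b is in d_B then all of τ is
  have hsub : ∀ B ∈ 𝓑, b ∈ dB B → τ ⊆ dB B := by
    intro B hB hbd
    have hbint : b ∈ interior (dB B) := by
      have hnf := hτS hb B hB
      rw [(hdBclosed B).frontier_eq] at hnf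
      by_contra h
      exact hnf ⟨hbd, h⟩
    have hcover : τ ⊆ interior (dB B) ∪ (closure (dB B))ᶜ := by
      intro x hx
      have hnf := hτS hx B hB
      rw [frontier_eq_closure_inter_closure] at hnf
      by_cases hcl : x ∈ closure (dB B)
      · left
        have h2 : x ∉ closure (dB B)ᶜ := fun h => hnf ⟨hcl, h⟩
        rw [closure_compl, Set.mem_compl_iff, not_not] at h2
        exact h2
      · right; exact hcl
    have hdisj : Disjoint (interior (dB B)) (closure (dB B))ᶜ :=
      Set.disjoint_left.2 fun x hx hx' => hx' (subset_closure (interior_subset hx))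
    have := hτconn.subset_left_of_subset_union isOpen_interior
      (isClosed_closure).isOpen_compl hdisj hcover ⟨b, hb, hbint⟩
    exact this.trans interior_subset
  -- compactness of P b
  have hPbclosed : IsClosed (P b) := by
    rw [hP]
    have : {x : Fin d → ℝ | ∀ k, μ k x ≤ b k} = ⋂ k, {x : Fin d → ℝ | μ k x ≤ b k} := by
      ext x; simp [Set.mem_iInter]
    rw [this]
    exact isClosed_iInter fun k =>
      isClosed_le ((μ k).continuous_of_finiteDimensional) continuous_const
  have hPbcompact : IsCompact (P b) := by
    choose c hc0 hceq using fun i : Fin d => hgen (LinearMap.proj i)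
    choose c' hc0' hceq' using fun i : Fin d => hgen (-(LinearMap.proj i))
    have hbox : P b ⊆ Set.Icc (fun i => -∑ k, c' i k * b k) (fun i => ∑ k, c i k * b k) := by
      intro x hx
      rw [hP] at hx
      constructor
      · intro i
        have h1 : -(x i) = ∑ k, c' i k * μ k x := by
          have := congrArg (fun ξ : (Fin d → ℝ) →ₗ[ℝ] ℝ => ξ x) (hceq' i)
          simpa [LinearMap.sum_apply, LinearMap.smul_apply, LinearMap.proj_apply] using this
        have h2 : ∑ k, c' i k * μ k x ≤ ∑ k, c' i k * b k :=
          Finset.sum_le_sum fun k _ => mul_le_mul_of_nonneg_left (hx k) (hc0' i k)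
        simp only [Pi.neg_apply]
        linarith
      · intro i
        have h1 : x i = ∑ k, c i k * μ k x := by
          have := congrArg (fun ξ : (Fin d → ℝ) →ₗ[ℝ] ℝ => ξ x) (hceq i)
          simpa [LinearMap.sum_apply, LinearMap.smul_apply, LinearMap.proj_apply] using this
        have h2 : ∑ k, c i k * μ k x ≤ ∑ k, c i k * b k :=
          Finset.sum_le_sum fun k _ => mul_le_mul_of_nonneg_left (hx k) (hc0 i k)
        linarith
    exact IsCompact.of_isClosed_subset isCompact_Icc hPbclosed hbox
  constructor
  · rintro ⟨p, hp, hpAI⟩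
    set F : Set (Fin d → ℝ) := P b ∩ {x | μ j x = b j} with hF
    have hFne : F.Nonempty := ⟨p ⟨0, hd⟩, (hp _).1, (hp _).2⟩
    have hFclosed : IsClosed F := hPbclosed.inter
      (isClosed_eq ((μ j).continuous_of_finiteDimensional) continuous_const)
    have hFcompact : IsCompact F :=
      hPbcompact.of_isClosed_subset hFclosed Set.inter_subset_left
    obtain ⟨v, hv⟩ := hFcompact.extremePoints_nonempty hFne
    rw [mem_extremePoints] at hv
    obtain ⟨⟨hvP, hvj⟩, hvext⟩ := hv
    have hvPb : ∀ k, μ k v ≤ b k := by rw [hP] at hvP; exact hvP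
    have hvj' : μ j v = b j := hvj
    set A : Finset (Fin N) := Finset.univ.filter (fun k => μ k v = b k) with hA
    have hjA : j ∈ A := by simp [hA, hvj']
    have hAv : ∀ k ∈ A, μ k v = b k := fun k hk => (Finset.mem_filter.1 hk).2
    have hspanA : Submodule.span ℝ (μ '' ↑A) = ⊤ := by
      by_contra hne
      have hWlt : Module.finrank ℝ (Submodule.span ℝ (μ '' (↑A : Set (Fin N)))) < d := by
        have h1 := Submodule.finrank_lt (K := ℝ) (V := Module.Dual ℝ (Fin d → ℝ))
          hne
        rwa [Subspace.dual_finrank_eq, Module.finrank_fin_fun] at h1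
      have hco := Subspace.finrank_add_finrank_dualCoannihilator_eq
        (Submodule.span ℝ (μ '' (↑A : Set (Fin N))))
      rw [Module.finrank_fin_fun] at hco
      have hne' : (Submodule.span ℝ (μ '' (↑A : Set (Fin N)))).dualCoannihilator ≠ ⊥ := by
        intro h0
        rw [h0, finrank_bot, add_zero] at hco
        exact absurd hco (Nat.ne_of_lt hWlt)
      obtain ⟨u, huW, hu0⟩ := Submodule.exists_mem_ne_zero_of_ne_bot hne'
      have hu_active : ∀ k ∈ A, μ k u = 0 := fun k hk =>
        (Submodule.mem_dualCoannihilator u).1 huW (μ k) (Submodule.subset_span ⟨k, hk, rfl⟩)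
      have hev : ∀ k : Fin N, ∀ᶠ ε : ℝ in nhds 0,
          μ k (v + ε • u) ≤ b k ∧ μ k (v - ε • u) ≤ b k := by
        intro k
        by_cases hk : k ∈ A
        · filter_upwards with ε
          simp [map_add, map_sub, map_smul, hu_active k hk, hAv k hk]
        · have hkv : μ k v < b k := lt_of_le_of_ne (hvPb k) (by simpa [hA] using hk)
          have hc1 : Continuous fun ε : ℝ => μ k v + ε * μ k u :=
            continuous_const.add (continuous_id.mul continuous_const)
          have h1 : Filter.Tendsto (fun ε : ℝ => μ k v + ε * μ k u) (nhds 0)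
              (nhds (μ k v)) := by simpa using hc1.tendsto 0
          have hc2 : Continuous fun ε : ℝ => μ k v - ε * μ k u :=
            continuous_const.sub (continuous_id.mul continuous_const)
          have h2 : Filter.Tendsto (fun ε : ℝ => μ k v - ε * μ k u) (nhds 0)
              (nhds (μ k v)) := by simpa using hc2.tendsto 0
          filter_upwards [h1.eventually_lt_const hkv, h2.eventually_lt_const hkv]
            with ε he1 he2
          constructor
          · rw [map_add, map_smul, smul_eq_mul]; exact le_of_lt he1
          · rw [map_sub, map_smul, smul_eq_mul]; exact le_of_lt he2
      obtain ⟨ε, hεall, hεpos⟩ :=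
        (((Filter.eventually_all.2 hev).filter_mono
          (nhdsWithin_le_nhds : nhdsWithin (0 : ℝ) (Set.Ioi 0) ≤ nhds 0)).and
          self_mem_nhdsWithin).exists
      have hεpos' : (0 : ℝ) < ε := hεpos
      have h1 : v + ε • u ∈ F := ⟨by rw [hP]; intro k; exact (hεall k).1, by
        show μ j _ = b j
        rw [map_add, map_smul, hu_active j hjA, smul_zero, add_zero, hvj']⟩
      have h2 : v - ε • u ∈ F := ⟨by rw [hP]; intro k; exact (hεall k).2, by
        show μ j _ = b j
        rw [map_sub, map_smul, hu_active j hjA, smul_zero, sub_zero, hvj']⟩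
      have hmid : v ∈ openSegment ℝ (v + ε • u) (v - ε • u) :=
        ⟨1/2, 1/2, by norm_num, by norm_num, by norm_num, by module⟩
      have hveq := (hvext _ h1 _ h2 hmid).1
      have hz : ε • u = 0 := by
        have := congrArg (fun z => z - v) hveq
        simpa using this
      rcases smul_eq_zero.1 hz with h | h
      · exact absurd h (ne_of_gt hεpos')
      · exact hu0 h
    by_cases hμj : μ j = 0
    · exfalso
      have hex : ∃ k₀ ∈ A, μ k₀ ≠ (0 : (Fin d → ℝ) →ₗ[ℝ] ℝ) := by
        by_contra hcon
        push_neg at hcon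
        have hle : Submodule.span ℝ (μ '' (↑A : Set (Fin N))) ≤ ⊥ :=
          Submodule.span_le.2 (by rintro _ ⟨k, hk, rfl⟩; simp [hcon k hk])
        rw [hspanA] at hle
        have hproj : (LinearMap.proj (⟨0, hd⟩ : Fin d) : (Fin d → ℝ) →ₗ[ℝ] ℝ) = 0 := by
          have h0 : (LinearMap.proj (⟨0, hd⟩ : Fin d) : (Fin d → ℝ) →ₗ[ℝ] ℝ)
              ∈ (⊥ : Submodule ℝ ((Fin d → ℝ) →ₗ[ℝ] ℝ)) := hle Submodule.mem_top
          rwa [Submodule.mem_bot] at h0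
        have hone := congrArg
          (fun ξ : (Fin d → ℝ) →ₗ[ℝ] ℝ => ξ (Pi.single (⟨0, hd⟩ : Fin d) 1)) hproj
        simp [LinearMap.proj_apply, Pi.single_eq_same] at hone
      obtain ⟨k₀, hk₀A, hk₀⟩ := hex
      obtain ⟨B, hBA, _, hBli, hBspan⟩ := aux_select μ A hspanA k₀ hk₀A hk₀
      have hB𝓑 : B ∈ 𝓑 := (h𝓑 B).2 ⟨hBli, hBspan⟩
      have hjB : j ∉ B := fun hmem => hBli.ne_zero ⟨j, hmem⟩ hμj
      have hveq : sB B b = v := aux_eq_of_agree μ B hBspan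
        (fun l hl => by rw [hsB B hB𝓑 b l hl, hAv l (hBA hl)])
      have hbdB : b ∈ dB B := by rw [hdB]; intro k hk; rw [hveq]; exact hvPb k
      have hlt := hstrict B hB𝓑 hbdB j hjB
      rw [hveq] at hlt
      exact absurd hvj' (ne_of_lt hlt)
    · obtain ⟨B, hBA, hjB, hBli, hBspan⟩ := aux_select μ A hspanA j hjA hμj
      have hB𝓑 : B ∈ 𝓑 := (h𝓑 B).2 ⟨hBli, hBspan⟩
      have hveq : sB B b = v := aux_eq_of_agree μ B hBspan
        (fun l hl => by rw [hsB B hB𝓑 b l hl, hAv l (hBA hl)])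
      have hbdB : b ∈ dB B := by rw [hdB]; intro k hk; rw [hveq]; exact hvPb k
      exact ⟨B, (h𝓑τ B).2 ⟨hB𝓑, hsub B hB𝓑 hbdB⟩, hjB⟩
  · rintro ⟨B, hBτ, hjB⟩
    obtain ⟨hB𝓑, hτB⟩ := (h𝓑τ B).1 hBτ
    obtain ⟨hBli, hBspan⟩ := (h𝓑 B).1 hB𝓑
    have hbdB : b ∈ dB B := hτB hb
    have hstr : ∀ k ∉ B, μ k (sB B b) < b k := hstrict B hB𝓑 hbdB
    have hvB : ∀ l ∈ B, μ l (sB B b) = b l := fun l hl => hsB B hB𝓑 b l hl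
    have hcard : Fintype.card {k // k ∈ B} = d := by
      have bB : Basis {k // k ∈ B} ℝ ((Fin d → ℝ) →ₗ[ℝ] ℝ) :=
        Basis.mk hBli (by rw [hBspan])
      have h1 := Module.finrank_eq_card_basis bB
      have h2 : Module.finrank ℝ ((Fin d → ℝ) →ₗ[ℝ] ℝ) = d := by
        have h3 := Subspace.dual_finrank_eq (K := ℝ) (V := Fin d → ℝ)
        rwa [Module.finrank_fin_fun] at h3
      rw [h2] at h1
      exact h1.symm
    let e : Fin d ≃ {k // k ∈ B} := (Fintype.equivFinOfCardEq hcard).symm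
    set w : {k // k ∈ B} → (Fin d → ℝ) :=
      fun m => sB B (Pi.single m.1 1) with hw_def
    have hw : ∀ l m : {k // k ∈ B}, μ l.1 (w m) = if l = m then 1 else 0 := by
      intro l m
      rw [hw_def, hsB B hB𝓑 _ l.1 l.2]
      by_cases h : l = m
      · subst h; simp [Pi.single_eq_same]
      · have hne : l.1 ≠ m.1 := fun he => h (Subtype.ext he)
        rw [if_neg h]
        exact Pi.single_eq_of_ne hne 1
    have hev : ∀ᶠ ε : ℝ in nhds 0, ∀ k, k ∉ B → ∀ m : {k' // k' ∈ B},
        μ k (sB B b - ε • w m) < b k := by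
      rw [Filter.eventually_all]
      intro k
      by_cases hk : k ∈ B
      · filter_upwards with ε hk' m
        exact absurd hk hk'
      · have hm : ∀ m : {k' // k' ∈ B}, ∀ᶠ ε : ℝ in nhds 0,
            μ k (sB B b - ε • w m) < b k := by
          intro m
          have hc : Continuous fun ε : ℝ => μ k (sB B b) - ε * μ k (w m) :=
            continuous_const.sub (continuous_id.mul continuous_const)
          have ht : Filter.Tendsto (fun ε : ℝ => μ k (sB B b) - ε * μ k (w m))
              (nhds 0) (nhds (μ k (sB B b))) := by simpa using hc.tendsto 0
          filter_upwards [ht.eventually_lt_const (hstr k hk)] with ε hε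
          rw [map_sub, map_smul, smul_eq_mul]
          exact hε
        filter_upwards [Filter.eventually_all.2 hm] with ε hε _ m
        exact hε m
    obtain ⟨ε, hεall, hεpos⟩ := ((hev.filter_mono
      (nhdsWithin_le_nhds : nhdsWithin (0 : ℝ) (Set.Ioi 0) ≤ nhds 0)).and
      self_mem_nhdsWithin).exists
    have hεpos' : (0 : ℝ) < ε := hεpos
    set i₀ : Fin d := e.symm ⟨j, hjB⟩ with hi₀
    set p : Fin d → (Fin d → ℝ) :=
      fun i => if i = i₀ then sB B b else sB B b - ε • w (e i) with hp_def
    refine ⟨p, fun i => ⟨?_, ?_⟩, ?_⟩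
    · rw [hP]
      intro k
      by_cases hi : i = i₀
      · have hpi : p i = sB B b := by rw [hp_def]; simp [hi]
        rw [hpi]
        by_cases hk : k ∈ B
        · exact (hvB k hk).le
        · exact (hstr k hk).le
      · have hpi : p i = sB B b - ε • w (e i) := by rw [hp_def]; simp [hi]
        rw [hpi]
        by_cases hk : k ∈ B
        · rw [map_sub, map_smul, smul_eq_mul, hvB k hk, hw ⟨k, hk⟩ (e i)]
          by_cases h2 : (⟨k, hk⟩ : {k' // k' ∈ B}) = e i
          · rw [if_pos h2]
            linarith
          · rw [if_neg h2]
            simp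
        · exact (hεall k hk (e i)).le
    · by_cases hi : i = i₀
      · have hpi : p i = sB B b := by rw [hp_def]; simp [hi]
        rw [hpi]
        exact hvB j hjB
      · have hpi : p i = sB B b - ε • w (e i) := by rw [hp_def]; simp [hi]
        rw [hpi, map_sub, map_smul, smul_eq_mul, hvB j hjB, hw ⟨j, hjB⟩ (e i)]
        have h2 : (⟨j, hjB⟩ : {k' // k' ∈ B}) ≠ e i := by
          intro he
          exact hi (by rw [hi₀, he, Equiv.symm_apply_apply])
        rw [if_neg h2]
        ring
    · rw [affineIndependent_iff_linearIndependent_vsub ℝ p i₀]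
      have hext : (fun i : {x : Fin d // x ≠ i₀} => p ↑i -ᵥ p ↑i₀)
          = fun i : {x : Fin d // x ≠ i₀} => -(ε • w (e ↑i)) := by
        funext i
        rw [hp_def]
        simp only [if_neg i.2, if_pos rfl, if_true]
        rw [vsub_eq_sub, sub_sub_cancel_left]
      rw [hext]
      refine Fintype.linearIndependent_iff.2 fun c hc i' => ?_
      have happ := congrArg (μ (e i'.1).1) hc
      rw [map_sum, map_zero] at happ
      have hzero : ∀ i : {x : Fin d // x ≠ i₀}, i ∈ Finset.univ → i ≠ i' →
          μ (e i'.1).1 (c i • -(ε • w (e i.1))) = 0 := by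
        intro i _ hne2
        have hval : μ (e i'.1).1 (w (e i.1)) = 0 := by
          rw [hw]
          refine if_neg fun he => hne2 ?_
          exact (Subtype.ext (e.injective he)).symm
        rw [map_smul, map_neg, map_smul, hval]
        simp
      rw [Finset.sum_eq_single i' hzero
        (fun h => absurd (Finset.mem_univ i') h)] at happ
      have hval : μ (e i'.1).1 (w (e i'.1)) = 1 := by rw [hw, if_pos rfl]
      rw [map_smul, map_neg, map_smul, hval] at happ
      have h0 : c i' * ε = 0 := by
        simp only [smul_eq_mul, mul_one, mul_neg, neg_eq_zero] at happ
        linarith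
      rcases mul_eq_zero.1 h0 with h | h
      · exact h
      · exact absurd h (ne_of_gt hεpos')
end

section
/- Assume that μ_1, …, μ_N generate (ℝ^d)* as a cone. Let τ be an admissible μ-chamber, let b^1, …, b^q be points of the topological closure of τ, and let t_1, …, t_q ≥ 0 be real numbers. Then the Minkowski sum satisfies t_1·P(b^1) + t_2·P(b^2) + ⋯ + t_q·P(b^q) = P(t_1·b^1 + t_2·b^2 + ⋯ + t_q·b^q), where t·A = {t·a : a ∈ A} and + on the left denotes Minkowski sum of subsets of ℝ^d. -/
open Finset Pointwise

/-- Expansion of a linear functional on a finite product in terms of coordinates. -/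
lemma aux_expand {ι : Type*} [Fintype ι] [DecidableEq ι]
    (ξ : (ι → ℝ) →ₗ[ℝ] ℝ) (x : ι → ℝ) :
    ξ x = ∑ i, x i * ξ (fun j => if i = j then 1 else 0) := by
  rw [ξ.pi_apply_eq_sum_univ x]
  simp [smul_eq_mul]

/-- Carathéodory for cones: a nonneg combination over `J` can be rewritten as a nonneg
combination over a subset with linearly independent vectors. -/
lemma cone_carath {N : ℕ} {V : Type*} [AddCommGroup V] [Module ℝ V] (m : Fin N → V) :
    ∀ (n : ℕ) (J : Finset (Fin N)), J.card ≤ n → ∀ c : Fin N → ℝ, (∀ j, 0 ≤ c j) →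
    ∃ S : Finset (Fin N), S ⊆ J ∧ (LinearIndependent ℝ (fun j : {j // j ∈ S} => m j)) ∧
      ∃ c' : Fin N → ℝ, (∀ j, 0 ≤ c' j) ∧ ∑ j ∈ S, c' j • m j = ∑ j ∈ J, c j • m j := by
  intro n
  induction n with
  | zero =>
    intro J hJ c hc
    have : J = ∅ := Finset.card_eq_zero.mp (Nat.le_zero.mp hJ)
    subst this
    refine ⟨∅, Finset.Subset.refl _, ?_, c, hc, rfl⟩
    have : IsEmpty {j : Fin N // j ∈ (∅ : Finset (Fin N))} := by
      constructor; rintro ⟨j, hj⟩; exact absurd hj (Finset.notMem_empty j)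
    exact linearIndependent_empty_type
  | succ n ih =>
    intro J hJ c hc
    by_cases hli : LinearIndependent ℝ (fun j : {j // j ∈ J} => m j)
    · exact ⟨J, Finset.Subset.refl _, hli, c, hc, rfl⟩
    · -- get a nontrivial relation
      obtain ⟨g, hg0, i0, hi0⟩ := Fintype.not_linearIndependent_iff.mp hli
      classical
      set lam : Fin N → ℝ := fun j => if h : j ∈ J then g ⟨j, h⟩ else 0 with hlam
      have hlamsum : ∑ j ∈ J, lam j • m j = 0 := by
        rw [← hg0, Finset.univ_eq_attach, ← Finset.sum_attach J (fun j => lam j • m j)]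
        apply Finset.sum_congr rfl
        intro x _
        simp [hlam, x.2]
      have hlam_ne : ∃ j ∈ J, lam j ≠ 0 := ⟨i0.1, i0.2, by simp [hlam, i0.2]; exact hi0⟩
      -- wlog there is a positive lam (else replace by -lam)
      have key : ∀ lam' : Fin N → ℝ, (∑ j ∈ J, lam' j • m j = 0) → (∃ j ∈ J, 0 < lam' j) →
          ∃ S : Finset (Fin N), S ⊆ J ∧
            (LinearIndependent ℝ (fun j : {j // j ∈ S} => m j)) ∧
          ∃ c' : Fin N → ℝ, (∀ j, 0 ≤ c' j) ∧ ∑ j ∈ S, c' j • m j = ∑ j ∈ J, c j • m j := by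
        intro lam' hsum ⟨jp, hjpJ, hjp⟩
        set T : Finset (Fin N) := J.filter (fun j => 0 < lam' j) with hT
        have hTne : T.Nonempty := ⟨jp, Finset.mem_filter.mpr ⟨hjpJ, hjp⟩⟩
        obtain ⟨js, hjsT, hjsmin⟩ := Finset.exists_min_image T (fun j => c j / lam' j) hTne
        have hjsJ : js ∈ J := (Finset.mem_filter.mp hjsT).1
        have hjs_pos : 0 < lam' js := (Finset.mem_filter.mp hjsT).2
        set tcoef := c js / lam' js with htc
        have htc_nonneg : 0 ≤ tcoef := div_nonneg (hc js) hjs_pos.le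
        set c'' : Fin N → ℝ := fun j => c j - tcoef * lam' j with hc''
        have hc''_nonneg : ∀ j ∈ J, 0 ≤ c'' j := by
          intro j hj
          rcases le_or_gt (lam' j) 0 with h | h
          · have : tcoef * lam' j ≤ 0 := mul_nonpos_of_nonneg_of_nonpos htc_nonneg h
            simp only [hc'']; linarith [hc j]
          · have hjT : j ∈ T := Finset.mem_filter.mpr ⟨hj, h⟩
            have h1 := hjsmin j hjT
            have h2 : tcoef * lam' j ≤ c j := by
              rw [htc, div_mul_eq_mul_div, div_le_iff₀ hjs_pos]
              rw [div_le_div_iff₀ hjs_pos h] at h1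
              linarith
            simp only [hc'']; linarith
        have hc''_js : c'' js = 0 := by
          simp only [hc'', htc]
          field_simp
          ring
        have hsum'' : ∑ j ∈ J, c'' j • m j = ∑ j ∈ J, c j • m j := by
          simp only [hc'', sub_smul, Finset.sum_sub_distrib]
          rw [show ∑ j ∈ J, (tcoef * lam' j) • m j = tcoef • ∑ j ∈ J, lam' j • m j by
            rw [Finset.smul_sum]; apply Finset.sum_congr rfl; intro j _; rw [smul_smul]]
          rw [hsum, smul_zero, sub_zero]
        -- now drop js
        have hcard : (J.erase js).card ≤ n := by
          have := Finset.card_erase_of_mem hjsJ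
          omega
        -- modify c'' to be c'' but we need nonneg globally; replace by max c'' 0 outside J?
        set c3 : Fin N → ℝ := fun j => if j ∈ J then c'' j else 0 with hc3
        have hc3_nonneg : ∀ j, 0 ≤ c3 j := by
          intro j; simp only [hc3]; split
          · exact hc''_nonneg j ‹_›
          · exact le_rfl
        obtain ⟨S, hSsub, hSli, c4, hc4, hc4sum⟩ := ih (J.erase js) hcard c3 hc3_nonneg
        refine ⟨S, hSsub.trans (Finset.erase_subset _ _), hSli, c4, hc4, ?_⟩
        rw [hc4sum]
        have h1 : ∑ j ∈ J.erase js, c3 j • m j = ∑ j ∈ J, c3 j • m j := by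
          apply Finset.sum_erase
          have : c3 js = c'' js := by simp [hc3, hjsJ]
          rw [this, hc''_js, zero_smul]
        rw [h1]
        rw [show ∑ j ∈ J, c3 j • m j = ∑ j ∈ J, c'' j • m j from
          Finset.sum_congr rfl (fun j hj => by simp [hc3, hj])]
        exact hsum''
      rcases hlam_ne with ⟨j1, hj1J, hj1⟩
      rcases lt_or_gt_of_ne hj1 with h | h
      · exact key (fun j => -lam j) (by simpa using hlamsum) ⟨j1, hj1J, by simpa using h⟩
      · exact key lam hlamsum ⟨j1, hj1J, h⟩

lemma cone_closed {N d : ℕ} (m : Fin N → (Fin d → ℝ)) (J : Finset (Fin N)) :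
    IsClosed {x : Fin d → ℝ | ∃ c : Fin N → ℝ, (∀ j, 0 ≤ c j) ∧ x = ∑ j ∈ J, c j • m j} := by
  classical
  have hpiece : ∀ S : Finset (Fin N), LinearIndependent ℝ (fun j : {j // j ∈ S} => m j) →
      IsClosed {x : Fin d → ℝ | ∃ c : Fin N → ℝ, (∀ j, 0 ≤ c j) ∧ x = ∑ j ∈ S, c j • m j} := by
    intro S hli
    set T : ({j // j ∈ S} → ℝ) →ₗ[ℝ] (Fin d → ℝ) :=
      ∑ jj : {j // j ∈ S}, (LinearMap.proj jj).smulRight (m jj.1) with hT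
    have hTapp : ∀ c : {j // j ∈ S} → ℝ, T c = ∑ jj : {j // j ∈ S}, c jj • m jj.1 := by
      intro c
      simp [hT, LinearMap.sum_apply, LinearMap.smulRight_apply, LinearMap.proj_apply]
    have hker : LinearMap.ker T = ⊥ := by
      rw [LinearMap.ker_eq_bot']
      intro c hc
      rw [hTapp] at hc
      funext jj
      exact Fintype.linearIndependent_iff.mp hli c hc jj
    have himg : {x : Fin d → ℝ | ∃ c : Fin N → ℝ, (∀ j, 0 ≤ c j) ∧ x = ∑ j ∈ S, c j • m j}
        = T '' {c : {j // j ∈ S} → ℝ | ∀ jj, 0 ≤ c jj} := by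
      ext x
      simp only [Set.mem_setOf_eq, Set.mem_image]
      constructor
      · rintro ⟨c, hc, rfl⟩
        refine ⟨fun jj => c jj.1, fun jj => hc jj.1, ?_⟩
        rw [hTapp, Finset.univ_eq_attach, Finset.sum_attach S (fun j => c j • m j)]
      · rintro ⟨c0, hc0, rfl⟩
        refine ⟨fun j => if h : j ∈ S then c0 ⟨j, h⟩ else 0, ?_, ?_⟩
        · intro j; dsimp; split
          · exact hc0 _
          · exact le_rfl
        · rw [hTapp, Finset.univ_eq_attach,
            ← Finset.sum_attach S (fun j => (if h : j ∈ S then c0 ⟨j, h⟩ else 0) • m j)]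
          apply Finset.sum_congr rfl
          intro jj _
          simp [jj.2]
    rw [himg]
    refine (LinearMap.isClosedEmbedding_of_injective hker).isClosedMap _ ?_
    have : {c : {j // j ∈ S} → ℝ | ∀ jj, 0 ≤ c jj} = ⋂ jj, {c | 0 ≤ c jj} := by
      ext c; simp [Set.mem_iInter]
    rw [this]
    exact isClosed_iInter (fun jj => isClosed_le continuous_const (continuous_apply jj))
  have hrepr : {x : Fin d → ℝ | ∃ c : Fin N → ℝ, (∀ j, 0 ≤ c j) ∧ x = ∑ j ∈ J, c j • m j}
      = ⋃ (S : Finset (Fin N)) (_ : S ⊆ J ∧ LinearIndependent ℝ (fun j : {j // j ∈ S} => m j)),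
        {x : Fin d → ℝ | ∃ c : Fin N → ℝ, (∀ j, 0 ≤ c j) ∧ x = ∑ j ∈ S, c j • m j} := by
    ext x
    simp only [Set.mem_iUnion, Set.mem_setOf_eq]
    constructor
    · rintro ⟨c, hc, rfl⟩
      obtain ⟨S, hSJ, hli, c', hc', hsum⟩ := cone_carath m J.card J le_rfl c hc
      exact ⟨S, ⟨hSJ, hli⟩, c', hc', hsum.symm⟩
    · rintro ⟨S, ⟨hSJ, _⟩, c, hc, rfl⟩
      refine ⟨fun j => if j ∈ S then c j else 0,
        fun j => by dsimp; split; exacts [hc j, le_rfl], ?_⟩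
      rw [← Finset.sum_subset hSJ (fun j _ hjS => by simp [hjS])]
      apply Finset.sum_congr rfl
      intro j hj; simp [hj]
  rw [hrepr]
  refine isClosed_iUnion_of_finite (fun S => ?_)
  rw [Set.iUnion_eq_if]
  split
  · exact hpiece S (by tauto)
  · exact isClosed_empty
set_option maxHeartbeats 1000000

theorem stmt_9
    (d N : ℕ) (hd : 1 ≤ d) (hN : 1 ≤ N)
    (μ : Fin N → ((Fin d → ℝ) →ₗ[ℝ] ℝ))
    -- the μ_j generate the dual space as a cone
    (hgen : ∀ ξ : (Fin d → ℝ) →ₗ[ℝ] ℝ,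
      ∃ c : Fin N → ℝ, (∀ j, 0 ≤ c j) ∧ ξ = ∑ j, c j • μ j)
    (P : (Fin N → ℝ) → Set (Fin d → ℝ))
    (hP : ∀ b, P b = {x | ∀ j, μ j x ≤ b j})
    (𝓑 : Set (Finset (Fin N)))
    (h𝓑 : ∀ B : Finset (Fin N), B ∈ 𝓑 ↔
      (LinearIndependent ℝ (fun j : {j // j ∈ B} => μ j.1) ∧
        Submodule.span ℝ (Set.range (fun j : {j // j ∈ B} => μ j.1)) = ⊤))
    (sB : Finset (Fin N) → ((Fin N → ℝ) →ₗ[ℝ] (Fin d → ℝ)))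
    (hsB : ∀ B ∈ 𝓑, ∀ b : Fin N → ℝ, ∀ j ∈ B, μ j (sB B b) = b j)
    (dB : Finset (Fin N) → Set (Fin N → ℝ))
    (hdB : ∀ B, dB B = {b | ∀ k ∉ B, μ k (sB B b) ≤ b k})
    -- τ is an admissible μ-chamber
    (τ : Set (Fin N → ℝ))
    (hτ : ∃ b₀ ∈ {b : Fin N → ℝ | ∀ B ∈ 𝓑, b ∉ frontier (dB B)},
      τ = connectedComponentIn {b : Fin N → ℝ | ∀ B ∈ 𝓑, b ∉ frontier (dB B)} b₀)
    (hadm : ∀ b ∈ τ, (P b).Nonempty)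
    (𝓑τ : Set (Finset (Fin N)))
    (h𝓑τ : ∀ B, B ∈ 𝓑τ ↔ B ∈ 𝓑 ∧ τ ⊆ dB B)
    (q : ℕ) (bv : Fin q → (Fin N → ℝ)) (hbv : ∀ i, bv i ∈ closure τ)
    (t : Fin q → ℝ) (ht : ∀ i, 0 ≤ t i) :
    -- Minkowski linearity: t_1·P(b^1) + ⋯ + t_q·P(b^q) = P(t_1·b^1 + ⋯ + t_q·b^q)
    ∑ i, t i • P (bv i) = P (∑ i, t i • bv i) := by
  classical
  obtain ⟨b₀, hb₀S, hτdef⟩ := hτ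
  have hb₀τ : b₀ ∈ τ := hτdef ▸ mem_connectedComponentIn hb₀S
  have hτsub : τ ⊆ {b : Fin N → ℝ | ∀ B ∈ 𝓑, b ∉ frontier (dB B)} :=
    hτdef ▸ connectedComponentIn_subset _ _
  -- basic properties of P
  have hPclosed : ∀ b, IsClosed (P b) := by
    intro b; rw [hP]
    have : {x : Fin d → ℝ | ∀ j, μ j x ≤ b j} = ⋂ j, {x : Fin d → ℝ | μ j x ≤ b j} := by
      ext x; simp [Set.mem_iInter]
    rw [this]
    exact isClosed_iInter fun j =>
      isClosed_le (μ j).continuous_of_finiteDimensional continuous_const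
  have hPconvex : ∀ b, Convex ℝ (P b) := by
    intro b
    rw [hP]
    rintro x hx y hy a a' ha ha' haa
    intro j
    have : μ j (a • x + a' • y) = a * μ j x + a' * μ j y := by
      simp [map_add, map_smul, smul_eq_mul]
    rw [this]
    have h1 : a * μ j x ≤ a * b j := mul_le_mul_of_nonneg_left (hx j) ha
    have h2 : a' * μ j y ≤ a' * b j := mul_le_mul_of_nonneg_left (hy j) ha'
    have h3 : a * b j + a' * b j = b j := by rw [← add_mul, haa, one_mul]
    linarith
  have hPcompact : ∀ b, IsCompact (P b) := by
    intro b
    choose cp hcp hcpeq using fun i : Fin d => hgen (LinearMap.proj i)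
    choose cm hcm hcmeq using fun i : Fin d => hgen (-(LinearMap.proj i))
    have hsub : P b ⊆ Set.pi Set.univ
        (fun i => Set.Icc (-(∑ j, cm i j * b j)) (∑ j, cp i j * b j)) := by
      intro x hx
      rw [hP] at hx
      intro i _
      constructor
      · have h1 : (-(LinearMap.proj i : (Fin d → ℝ) →ₗ[ℝ] ℝ)) x = ∑ j, cm i j * μ j x := by
          rw [hcmeq i]; simp [LinearMap.sum_apply, smul_eq_mul]
        have h2 : ∑ j, cm i j * μ j x ≤ ∑ j, cm i j * b j :=
          Finset.sum_le_sum (fun j _ => mul_le_mul_of_nonneg_left (hx j) (hcm i j))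
        simp only [LinearMap.neg_apply, LinearMap.proj_apply] at h1
        have h3 : -x i ≤ ∑ j, cm i j * b j := by rw [h1]; exact h2
        linarith
      · have h1 : (LinearMap.proj i : (Fin d → ℝ) →ₗ[ℝ] ℝ) x = ∑ j, cp i j * μ j x := by
          rw [hcpeq i]; simp [LinearMap.sum_apply, smul_eq_mul]
        have h2 : ∑ j, cp i j * μ j x ≤ ∑ j, cp i j * b j :=
          Finset.sum_le_sum (fun j _ => mul_le_mul_of_nonneg_left (hx j) (hcp i j))
        simp only [LinearMap.proj_apply] at h1
        rw [← h1] at h2; exact h2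
    exact (isCompact_univ_pi (fun i => isCompact_Icc)).of_isClosed_subset (hPclosed b) hsub
  -- dB closed
  have hdBclosed : ∀ B, IsClosed (dB B) := by
    intro B
    rw [hdB]
    have : {b : Fin N → ℝ | ∀ k ∉ B, μ k (sB B b) ≤ b k}
        = ⋂ k, ⋂ (_ : k ∉ B), {b : Fin N → ℝ | μ k (sB B b) ≤ b k} := by
      ext b; simp [Set.mem_iInter]
    rw [this]
    refine isClosed_iInter fun k => isClosed_iInter fun _ => ?_
    exact isClosed_le (((μ k).comp (sB B)).continuous_of_finiteDimensional) (continuous_apply k)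
  -- clopen argument
  have hclopen : ∀ B ∈ 𝓑, ∀ b' ∈ τ, b' ∈ dB B → τ ⊆ dB B := by
    intro B hB b' hb' hb'dB b hb
    by_contra hbndB
    have hpc : IsPreconnected τ := hτdef ▸ isPreconnected_connectedComponentIn
    have hcover : τ ⊆ interior (dB B) ∪ (dB B)ᶜ := by
      intro y hy
      rcases Classical.em (y ∈ dB B) with h | h
      · left
        have hyS := hτsub hy B hB
        rw [(hdBclosed B).frontier_eq] at hyS
        by_contra hni
        exact hyS ⟨h, hni⟩
      · right; exact h
    have h1 : (τ ∩ interior (dB B)).Nonempty := by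
      refine ⟨b', hb', ?_⟩
      have hyS := hτsub hb' B hB
      rw [(hdBclosed B).frontier_eq] at hyS
      by_contra hni
      exact hyS ⟨hb'dB, hni⟩
    have h2 : (τ ∩ (dB B)ᶜ).Nonempty := ⟨b, hb, hbndB⟩
    obtain ⟨z, hzτ, hzU, hzW⟩ := hpc _ _ isOpen_interior (hdBclosed B).isOpen_compl hcover h1 h2
    exact hzW (interior_subset hzU)
  -- uniqueness of sB
  have hSBu : ∀ B ∈ 𝓑, ∀ (b : Fin N → ℝ) (x : Fin d → ℝ),
      (∀ j ∈ B, μ j x = b j) → x = sB B b := by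
    intro B hB b x hx
    have hspan := ((h𝓑 B).mp hB).2
    have hz : ∀ ξ : (Fin d → ℝ) →ₗ[ℝ] ℝ, ξ (x - sB B b) = 0 := by
      intro ξ
      have hξ : ξ ∈ Submodule.span ℝ (Set.range fun j : {j // j ∈ B} => μ j.1) :=
        hspan ▸ Submodule.mem_top
      induction hξ using Submodule.span_induction with
      | mem ζ hζ =>
        obtain ⟨j, rfl⟩ := hζ
        rw [map_sub, hx j.1 j.2, hsB B hB b j.1 j.2, sub_self]
      | zero => simp
      | add ζ₁ ζ₂ _ _ h1 h2 => simp [LinearMap.add_apply, h1, h2]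
      | smul a ζ _ h1 => simp [LinearMap.smul_apply, h1]
    have hx0 : x - sB B b = 0 := by
      funext i
      have := hz (LinearMap.proj i)
      simpa using this
    exact sub_eq_zero.mp hx0
  -- sB B b feasible when b ∈ dB B
  have hsBP : ∀ B ∈ 𝓑, ∀ b, b ∈ dB B → sB B b ∈ P b := by
    intro B hB b hbd
    rw [hP]
    intro j
    by_cases hj : j ∈ B
    · rw [hsB B hB b j hj]
    · rw [hdB] at hbd; exact hbd j hj
  -- closure of τ inside dB B
  have hcτ : ∀ B ∈ 𝓑τ, closure τ ⊆ dB B :=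
    fun B hB => closure_minimal ((h𝓑τ B).mp hB).2 (hdBclosed B)
  -- KEY STEP
  have hkey : ∀ f : (Fin d → ℝ) →L[ℝ] ℝ,
      ∃ B ∈ 𝓑τ, ∀ (b : Fin N → ℝ), ∀ x ∈ P b, f x ≤ f (sB B b) := by
    intro f
    obtain ⟨x₁, hx₁P, hx₁max⟩ :=
      (hPcompact b₀).exists_isMaxOn (hadm b₀ hb₀τ) f.continuous.continuousOn
    set F : Set (Fin d → ℝ) := P b₀ ∩ {x | f x = f x₁} with hFdef
    have hFcompact : IsCompact F :=
      (hPcompact b₀).inter_right (isClosed_eq f.continuous continuous_const)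
    have hFconvex : Convex ℝ F :=
      (hPconvex b₀).inter (convex_hyperplane
        (⟨fun a b => by simp, fun c a => by simp⟩ : IsLinearMap ℝ f) (f x₁))
    have hFne : F.Nonempty := ⟨x₁, hx₁P, rfl⟩
    obtain ⟨x₀, hx₀⟩ := hFcompact.extremePoints_nonempty hFne
    have hx₀F : x₀ ∈ F := hx₀.1
    have hx₀P : x₀ ∈ P b₀ := hx₀F.1
    have hx₀max : ∀ z ∈ P b₀, f z ≤ f x₀ := by
      intro z hz
      have : f x₀ = f x₁ := hx₀F.2
      rw [this]
      exact hx₁max hz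
    set J : Finset (Fin N) := Finset.univ.filter (fun j => μ j x₀ = b₀ j) with hJdef
    have hx₀Pb : ∀ j, μ j x₀ ≤ b₀ j := by rw [hP] at hx₀P; exact hx₀P
    -- perturbation lemma
    have hpert : ∀ v : Fin d → ℝ, (∀ j ∈ J, μ j v ≤ 0) → ∃ ε : ℝ, 0 < ε ∧ x₀ + ε • v ∈ P b₀ := by
      intro v hv
      have hNne : (Finset.univ : Finset (Fin N)).Nonempty := ⟨⟨0, hN⟩, Finset.mem_univ _⟩
      set e : Fin N → ℝ := fun j => if 0 < μ j v then (b₀ j - μ j x₀) / (μ j v) else 1 with hedef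
      have hepos : ∀ j, 0 < e j := by
        intro j
        rw [hedef]
        dsimp only
        split
        · rename_i hpos
          apply div_pos _ hpos
          have hjJ : j ∉ J := fun hjJ => absurd (hv j hjJ) (not_le.mpr hpos)
          have hne : μ j x₀ ≠ b₀ j := by
            intro heq
            exact hjJ (by rw [hJdef]; simp [heq])
          have := hx₀Pb j
          have := lt_of_le_of_ne this hne
          linarith
        · exact one_pos
      set ε := Finset.univ.inf' hNne e with hεdef
      have hεpos : 0 < ε := by
        rw [hεdef, Finset.lt_inf'_iff]
        exact fun j _ => hepos j
      refine ⟨ε, hεpos, ?_⟩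
      rw [hP]
      intro j
      have happ : μ j (x₀ + ε • v) = μ j x₀ + ε * μ j v := by
        rw [map_add, map_smul]; rfl
      rw [happ]
      rcases le_or_gt (μ j v) 0 with h | h
      · have : ε * μ j v ≤ 0 := mul_nonpos_of_nonneg_of_nonpos hεpos.le h
        linarith [hx₀Pb j]
      · have hεle : ε ≤ e j := Finset.inf'_le e (Finset.mem_univ j)
        rw [hedef] at hεle
        simp only [if_pos h] at hεle
        have : ε * μ j v ≤ b₀ j - μ j x₀ := by
          rw [← le_div_iff₀ h]
          exact hεle
        linarith
    -- span claim
    have hspanJ : Submodule.span ℝ (Set.range fun j : {j // j ∈ J} => μ j.1) = ⊤ := by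
      set Φ : (Fin d → ℝ) →ₗ[ℝ] ({j // j ∈ J} → ℝ) := LinearMap.pi (fun jj => μ jj.1) with hΦdef
      have hkerΦ : LinearMap.ker Φ = ⊥ := by
        rw [LinearMap.ker_eq_bot']
        intro v hv
        by_contra hv0
        have hμv : ∀ j ∈ J, μ j v = 0 := by
          intro j hj
          have := congrFun hv ⟨j, hj⟩
          simpa [hΦdef, LinearMap.pi_apply] using this
        obtain ⟨ε₁, hε₁, hy₁⟩ := hpert v (fun j hj => (hμv j hj).le)
        obtain ⟨ε₂, hε₂, hy₂⟩ := hpert (-v) (fun j hj => by simp [hμv j hj])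
        have hfv1 : f (x₀ + ε₁ • v) ≤ f x₀ := hx₀max _ hy₁
        have hfv2 : f (x₀ + ε₂ • (-v)) ≤ f x₀ := hx₀max _ hy₂
        rw [map_add, map_smul, smul_eq_mul] at hfv1 hfv2
        have hfv : f v = 0 := by
          have h1 : ε₁ * f v ≤ 0 := by linarith
          have h2 : ε₂ * f (-v) ≤ 0 := by linarith
          rw [map_neg] at h2
          have h1' : f v ≤ 0 := by nlinarith
          have h2' : 0 ≤ f v := by nlinarith
          linarith
        have hy₁F : x₀ + ε₁ • v ∈ F := by
          refine ⟨hy₁, ?_⟩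
          show f (x₀ + ε₁ • v) = f x₁
          rw [map_add, map_smul, smul_eq_mul, hfv, mul_zero, add_zero]
          exact hx₀F.2
        have hy₂F : x₀ + ε₂ • (-v) ∈ F := by
          refine ⟨hy₂, ?_⟩
          show f (x₀ + ε₂ • (-v)) = f x₁
          rw [map_add, map_smul, smul_eq_mul, map_neg, hfv, neg_zero, mul_zero, add_zero]
          exact hx₀F.2
        have hseg : x₀ ∈ openSegment ℝ (x₀ + ε₁ • v) (x₀ + ε₂ • (-v)) := by
          refine ⟨ε₂ / (ε₁ + ε₂), ε₁ / (ε₁ + ε₂), by positivity, by positivity, ?_, ?_⟩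
          · field_simp
            ring
          · match_scalars <;> (field_simp; try ring)
        have hext := (mem_extremePoints.mp hx₀).2 _ hy₁F _ hy₂F hseg
        have h0 : ε₁ • v = 0 := add_eq_left.mp hext.1
        exact hv0 ((smul_eq_zero.mp h0).resolve_left (ne_of_gt hε₁))
      obtain ⟨g, hg⟩ := Φ.exists_leftInverse_of_injective hkerΦ
      rw [eq_top_iff]
      rintro ξ -
      have hgΦ : ∀ x, g (Φ x) = x := fun x => congrFun (congrArg DFunLike.coe hg) x
      have hexp : ∀ x : Fin d → ℝ, ξ x =
          ∑ jj : {j // j ∈ J}, (Φ x) jj * (ξ.comp g) (fun jj' => if jj = jj' then 1 else 0) := by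
        intro x
        have h1 : ξ x = (ξ.comp g) (Φ x) := by
          rw [LinearMap.comp_apply, hgΦ]
        rw [h1]
        exact aux_expand _ _
      have hrepr : ξ = ∑ jj : {j // j ∈ J},
          ((ξ.comp g) (fun jj' => if jj = jj' then 1 else 0)) • μ jj.1 := by
        apply LinearMap.ext
        intro x
        rw [hexp x]
        rw [LinearMap.sum_apply]
        apply Finset.sum_congr rfl
        intro jj _
        rw [LinearMap.smul_apply, smul_eq_mul, hΦdef, LinearMap.pi_apply, mul_comm]
      rw [hrepr]
      exact Submodule.sum_mem _ (fun jj _ =>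
        Submodule.smul_mem _ _ (Submodule.subset_span ⟨jj, rfl⟩))
    -- coordinate vectors
    set δv : Fin d → (Fin d → ℝ) := fun i => (fun j' => if i = j' then 1 else 0) with hδdef
    set m : Fin N → (Fin d → ℝ) := fun j => (fun i => μ j (δv i)) with hmdef
    have hmμ : ∀ (j : Fin N) (x : Fin d → ℝ), μ j x = ∑ i, x i * m j i := by
      intro j x
      exact aux_expand (μ j) x
    set yf : Fin d → ℝ := fun i => f (δv i) with hyfdef
    have hfeq : ∀ x : Fin d → ℝ, f x = ∑ i, x i * yf i := by
      intro x
      exact aux_expand (f : (Fin d → ℝ) →ₗ[ℝ] ℝ) x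
    -- KKT via separation from the closed cone
    have hKKT : ∃ c : Fin N → ℝ, (∀ j, 0 ≤ c j) ∧ yf = ∑ j ∈ J, c j • m j := by
      by_contra hnot
      have hyfC : yf ∉ {x : Fin d → ℝ | ∃ c : Fin N → ℝ,
          (∀ j, 0 ≤ c j) ∧ x = ∑ j ∈ J, c j • m j} := by
        rintro ⟨c, hc, hyc⟩
        exact hnot ⟨c, hc, hyc⟩
      have hCconvex : Convex ℝ {x : Fin d → ℝ | ∃ c : Fin N → ℝ,
          (∀ j, 0 ≤ c j) ∧ x = ∑ j ∈ J, c j • m j} := by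
        rintro x ⟨c1, hc1, rfl⟩ y ⟨c2, hc2, rfl⟩ a a' ha ha' haa
        refine ⟨fun j => a * c1 j + a' * c2 j,
          fun j => add_nonneg (mul_nonneg ha (hc1 j)) (mul_nonneg ha' (hc2 j)), ?_⟩
        rw [Finset.smul_sum, Finset.smul_sum, ← Finset.sum_add_distrib]
        refine Finset.sum_congr rfl fun j _ => ?_
        rw [smul_smul, smul_smul, ← add_smul]
      obtain ⟨g, u, hgu, hguy⟩ :=
        geometric_hahn_banach_closed_point hCconvex (cone_closed m J) hyfC
      have hu0 : 0 < u := by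
        have h00 := hgu 0 ⟨0, fun j => le_rfl, by simp⟩
        simpa using h00
      have hgm : ∀ j ∈ J, g (m j) ≤ 0 := by
        intro j hj
        by_contra hpos
        push_neg at hpos
        have hsm : ∀ s : ℝ, 0 ≤ s → s * g (m j) < u := by
          intro s hs
          have hmem : s • m j ∈ {x : Fin d → ℝ | ∃ c : Fin N → ℝ,
              (∀ j, 0 ≤ c j) ∧ x = ∑ j ∈ J, c j • m j} := by
            refine ⟨fun j' => if j' = j then s else 0,
              fun j' => by dsimp only; split; exacts [hs, le_rfl], ?_⟩
            have hcongr : ∀ j' ∈ J, (if j' = j then s else 0) • m j'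
                = if j' = j then s • m j else 0 := by
              intro j' _
              split <;> rename_i h <;> simp [h]
            rw [Finset.sum_congr rfl hcongr, Finset.sum_ite_eq' J j (fun _ => s • m j), if_pos hj]
          have := hgu _ hmem
          rwa [map_smul, smul_eq_mul] at this
        have hcon := hsm (2 * u / g (m j)) (by positivity)
        rw [div_mul_cancel₀ _ (ne_of_gt hpos)] at hcon
        linarith
      set w : Fin d → ℝ := fun i => g (δv i) with hwdef
      have hgexp : ∀ x : Fin d → ℝ, g x = ∑ i, x i * w i := by
        intro x
        exact aux_expand (g : (Fin d → ℝ) →ₗ[ℝ] ℝ) x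
      have hμw : ∀ j ∈ J, μ j w ≤ 0 := by
        intro j hj
        have h3 : μ j w = g (m j) := by
          rw [hmμ j w, hgexp (m j)]
          exact Finset.sum_congr rfl fun i _ => mul_comm _ _
        rw [h3]
        exact hgm j hj
      have hfw : 0 < f w := by
        have h3 : f w = g yf := by
          rw [hfeq w, hgexp yf]
          exact Finset.sum_congr rfl fun i _ => mul_comm _ _
        rw [h3]
        linarith
      obtain ⟨ε, hε, hmem⟩ := hpert w hμw
      have hle := hx₀max _ hmem
      rw [map_add, map_smul, smul_eq_mul] at hle
      nlinarith
    obtain ⟨c, hc, hyfc⟩ := hKKT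
    -- Carathéodory
    obtain ⟨S, hSJ, hSli, c', hc', hc'sum⟩ := cone_carath m J.card J le_rfl c hc
    have hyfS : yf = ∑ j ∈ S, c' j • m j := by rw [hyfc, ← hc'sum]
    have hfS : ∀ x : Fin d → ℝ, f x = ∑ j ∈ S, c' j * μ j x := by
      intro x
      rw [hfeq x]
      calc ∑ i, x i * yf i = ∑ i, ∑ j ∈ S, x i * (c' j * m j i) := by
            refine Finset.sum_congr rfl fun i _ => ?_
            rw [show yf i = ∑ j ∈ S, c' j * m j i by
              rw [hyfS]; simp [Finset.sum_apply], Finset.mul_sum]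
        _ = ∑ j ∈ S, ∑ i, x i * (c' j * m j i) := Finset.sum_comm
        _ = ∑ j ∈ S, c' j * μ j x := by
            refine Finset.sum_congr rfl fun j _ => ?_
            rw [hmμ j x, Finset.mul_sum]
            exact Finset.sum_congr rfl fun i _ => by ring
    -- transfer linear independence to the functionals
    set T : (Fin d → ℝ) →ₗ[ℝ] ((Fin d → ℝ) →ₗ[ℝ] ℝ) :=
      { toFun := fun v => ∑ i, v i • (LinearMap.proj i : (Fin d → ℝ) →ₗ[ℝ] ℝ),
        map_add' := by intro v w'; simp [add_smul, Finset.sum_add_distrib],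
        map_smul' := by intro a v; simp [smul_smul, Finset.smul_sum] } with hTdef
    have hTapp : ∀ (v x : Fin d → ℝ), T v x = ∑ i, v i * x i := by
      intro v x
      simp [hTdef, LinearMap.sum_apply, smul_eq_mul]
    have hTm : ∀ j, T (m j) = μ j := by
      intro j
      apply LinearMap.ext
      intro x
      rw [hTapp, hmμ j x]
      exact Finset.sum_congr rfl fun i _ => mul_comm _ _
    have hTker : LinearMap.ker T = ⊥ := by
      rw [LinearMap.ker_eq_bot']
      intro v hv
      funext i
      have h1 : T v (δv i) = 0 := by rw [hv]; rfl
      rw [hTapp] at h1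
      have h2 : ∑ i', v i' * δv i i' = v i := by
        simp [hδdef, mul_ite, Finset.sum_ite_eq]
      rw [h2] at h1
      exact h1
    have hμSli : LinearIndependent ℝ (fun j : {j // j ∈ S} => μ j.1) := by
      have hmap := hSli.map' T hTker
      have heq : (T ∘ fun j : {j // j ∈ S} => m j.1) = fun j : {j // j ∈ S} => μ j.1 :=
        funext fun j => hTm j.1
      rwa [heq] at hmap
    -- basis extension inside J
    have hinjS : Set.InjOn (fun j => μ j) ↑S := by
      intro a ha b hb hab
      have := hμSli.injective (a₁ := ⟨a, ha⟩) (a₂ := ⟨b, hb⟩) hab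
      exact congrArg Subtype.val this
    have hliS : LinearIndependent ℝ
        ((↑) : ((fun j => μ j) '' ↑S) → ((Fin d → ℝ) →ₗ[ℝ] ℝ)) :=
      (linearIndepOn_iff_image hinjS).mp hμSli
    obtain ⟨bset, hbt, hsb, htspan, hbli⟩ :=
      exists_linearIndepOn_id_extension hliS (Set.image_mono (fun j hj => hSJ hj))
    have hJim : Set.range (fun j : {j // j ∈ J} => μ j.1) = (fun j => μ j) '' ↑J := by
      ext ξ
      constructor
      · rintro ⟨jj, rfl⟩; exact ⟨jj.1, jj.2, rfl⟩
      · rintro ⟨j, hj, rfl⟩; exact ⟨⟨j, hj⟩, rfl⟩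
    have hspan_bset : Submodule.span ℝ bset = ⊤ := by
      rw [eq_top_iff, ← hspanJ, hJim]
      exact Submodule.span_le.mpr htspan
    have hch : ∀ w ∈ bset, ∃ j : Fin N, j ∈ J ∧ μ j = w ∧ ((∃ j' ∈ S, μ j' = w) → j ∈ S) := by
      intro w hw
      by_cases hwS : ∃ j' ∈ S, μ j' = w
      · obtain ⟨j', hj'S, hj'⟩ := hwS
        exact ⟨j', hSJ hj'S, hj', fun _ => hj'S⟩
      · obtain ⟨j, hj, hjw⟩ := hbt hw
        exact ⟨j, hj, hjw, fun h => absurd h hwS⟩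
    choose p hpJ hpw hpS using hch
    have hbfin : bset.Finite := (Set.toFinite ((fun j => μ j) '' ↑J)).subset hbt
    set Bf : Finset (Fin N) :=
      hbfin.toFinset.attach.image (fun w => p w.1 (hbfin.mem_toFinset.mp w.2)) with hBfdef
    have hmemBf : ∀ j, j ∈ Bf ↔ ∃ w, ∃ hw : w ∈ bset, p w hw = j := by
      intro j
      rw [hBfdef]
      simp only [Finset.mem_image, Finset.mem_attach, true_and]
      constructor
      · rintro ⟨⟨w, hw⟩, rfl⟩
        exact ⟨w, hbfin.mem_toFinset.mp hw, rfl⟩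
      · rintro ⟨w, hw, rfl⟩
        exact ⟨⟨w, hbfin.mem_toFinset.mpr hw⟩, rfl⟩
    have hBfJ : Bf ⊆ J := by
      intro j hj
      obtain ⟨w, hw, rfl⟩ := (hmemBf j).mp hj
      exact hpJ w hw
    have hSBf : S ⊆ Bf := by
      intro j hj
      have hwb : μ j ∈ bset := hsb ⟨j, hj, rfl⟩
      have hpmem : p (μ j) hwb ∈ S := hpS _ hwb ⟨j, hj, rfl⟩
      have hpj : p (μ j) hwb = j := hinjS hpmem hj (hpw _ hwb)
      rw [← hpj]
      exact (hmemBf _).mpr ⟨μ j, hwb, rfl⟩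
    have himgBf : (fun j => μ j) '' ↑Bf = bset := by
      ext w
      constructor
      · rintro ⟨j, hj, rfl⟩
        obtain ⟨w', hw', rfl⟩ := (hmemBf j).mp hj
        simpa [hpw w' hw'] using hw'
      · intro hw
        exact ⟨p w hw, (hmemBf _).mpr ⟨w, hw, rfl⟩, hpw w hw⟩
    have hinjBf : Set.InjOn (fun j => μ j) ↑Bf := by
      intro a ha b hb hab
      obtain ⟨w1, hw1, rfl⟩ := (hmemBf a).mp ha
      obtain ⟨w2, hw2, rfl⟩ := (hmemBf b).mp hb
      have hw12 : w1 = w2 := by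
        rw [← hpw w1 hw1, ← hpw w2 hw2]
        exact hab
      subst hw12
      rfl
    have hBf𝓑 : Bf ∈ 𝓑 := by
      rw [h𝓑]
      constructor
      · exact (linearIndepOn_iff_image hinjBf).mpr (himgBf ▸ hbli)
      · have hr : Set.range (fun j : {j // j ∈ Bf} => μ j.1) = (fun j => μ j) '' ↑Bf := by
          ext ξ
          constructor
          · rintro ⟨jj, rfl⟩; exact ⟨jj.1, jj.2, rfl⟩
          · rintro ⟨j, hj, rfl⟩; exact ⟨⟨j, hj⟩, rfl⟩
        rw [hr, himgBf, hspan_bset]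
    have hx₀B : x₀ = sB Bf b₀ := by
      apply hSBu Bf hBf𝓑
      intro j hj
      have hjJ : j ∈ J := hBfJ hj
      rw [hJdef] at hjJ
      exact (Finset.mem_filter.mp hjJ).2
    have hb₀dB : b₀ ∈ dB Bf := by
      rw [hdB]
      intro k hk
      rw [← hx₀B]
      exact hx₀Pb k
    have hBτ : Bf ∈ 𝓑τ := (h𝓑τ Bf).mpr ⟨hBf𝓑, hclopen Bf hBf𝓑 b₀ hb₀τ hb₀dB⟩
    refine ⟨Bf, hBτ, ?_⟩
    intro b x hx
    rw [hfS x, hfS (sB Bf b)]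
    refine Finset.sum_le_sum fun j hj => ?_
    have hjB : j ∈ Bf := hSBf hj
    rw [hsB Bf hBf𝓑 b j hjB]
    have hxb : μ j x ≤ b j := by rw [hP] at hx; exact hx j
    exact mul_le_mul_of_nonneg_left hxb (hc' j)


  set bstar : Fin N → ℝ := ∑ i, t i • bv i with hbstardef
  -- the combination point lies in all dB B for B ∈ 𝓑τ
  have hbstar : ∀ B ∈ 𝓑τ, bstar ∈ dB B := by
    intro B hB
    rw [hdB]
    intro k hk
    have hbvd : ∀ i, bv i ∈ dB B := fun i => hcτ B hB (hbv i)
    have h1 : μ k (sB B bstar) = ∑ i, t i * μ k (sB B (bv i)) := by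
      rw [hbstardef, map_sum, map_sum]
      exact Finset.sum_congr rfl fun i _ => by rw [map_smul, map_smul]; rfl
    have h2 : bstar k = ∑ i, t i * bv i k := by
      rw [hbstardef]; simp [Finset.sum_apply]
    rw [h1, h2]
    refine Finset.sum_le_sum fun i _ => ?_
    have hkk : μ k (sB B (bv i)) ≤ bv i k := by
      have := hbvd i
      rw [hdB] at this
      exact this k hk
    exact mul_le_mul_of_nonneg_left hkk (ht i)
  -- P(b*) inside convex hull of the vertices
  have hPQ : P bstar ⊆ convexHull ℝ ((fun B => sB B bstar) '' 𝓑τ) := by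
    intro x hx
    by_contra hxQ
    have hQclosed : IsClosed (convexHull ℝ ((fun B => sB B bstar) '' 𝓑τ)) :=
      ((Set.toFinite 𝓑τ).image _).isClosed_convexHull ℝ
    obtain ⟨f, u, hfa, hfx⟩ :=
      geometric_hahn_banach_closed_point (convex_convexHull ℝ _) hQclosed hxQ
    obtain ⟨B, hB, hfB⟩ := hkey f
    have h1 : f (sB B bstar) < u := hfa _ (subset_convexHull ℝ _ ⟨B, hB, rfl⟩)
    have h2 := hfB bstar x hx
    linarith
  -- final assembly
  apply Set.Subset.antisymm
  · intro x hx
    rw [Set.mem_fintype_sum] at hx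
    obtain ⟨g, hg, rfl⟩ := hx
    choose z hz hgz using fun i => (Set.mem_smul_set.mp (hg i))
    rw [hP]
    intro j
    have h1 : μ j (∑ i, g i) = ∑ i, t i * μ j (z i) := by
      rw [map_sum]
      exact Finset.sum_congr rfl fun i _ => by rw [← hgz i, map_smul]; rfl
    have h2 : bstar j = ∑ i, t i * bv i j := by rw [hbstardef]; simp [Finset.sum_apply]
    rw [h1, h2]
    refine Finset.sum_le_sum fun i _ => ?_
    have : μ j (z i) ≤ bv i j := by
      have := hz i
      rw [hP] at this
      exact this j
    exact mul_le_mul_of_nonneg_left this (ht i)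
  · intro x hx
    have hxQ := hPQ hx
    have hconv : Convex ℝ (∑ i, t i • P (bv i)) := by
      refine Finset.sum_induction _ (fun s => Convex ℝ s) (fun a b ha hb => ha.add hb) ?_
        (fun i _ => (hPconvex (bv i)).smul (t i))
      exact convex_zero
    refine convexHull_min ?_ hconv hxQ
    rintro y ⟨B, hB, rfl⟩
    rw [Set.mem_fintype_sum]
    refine ⟨fun i => t i • sB B (bv i), fun i =>
      Set.smul_mem_smul_set (hsBP B ((h𝓑τ B).mp hB).1 (bv i) (hcτ B hB (hbv i))), ?_⟩
    show ∑ i, t i • sB B (bv i) = sB B bstar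
    rw [hbstardef, map_sum]
    exact Finset.sum_congr rfl fun i _ => by rw [map_smul]
end

section
/- Let V be a finite-dimensional real vector space and let 𝓛 be a finite family of linear subspaces of V that is closed under sums. Then there exists a unique function ρ : 𝓛 → ℝ such that the indicator function of the union ⋃_{L ∈ 𝓛} L^⊥ ⊆ V* equals Σ_{L ∈ 𝓛} ρ(L)·𝟙_{L^⊥} pointwise on V*. -/
open Finset

private noncomputable def ind {D : Type} [AddCommGroup D] [Module ℝ D]
    (W : Submodule ℝ D) (ξ : D) : ℝ :=
  Set.indicator (W : Set D) (fun _ => (1 : ℝ)) ξ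

private lemma ind_of_mem {D : Type} [AddCommGroup D] [Module ℝ D]
    {W : Submodule ℝ D} {ξ : D} (h : ξ ∈ W) : ind W ξ = 1 :=
  Set.indicator_of_mem h _

private lemma ind_of_not_mem {D : Type} [AddCommGroup D] [Module ℝ D]
    {W : Submodule ℝ D} {ξ : D} (h : ξ ∉ W) : ind W ξ = 0 :=
  Set.indicator_of_notMem h _

private lemma ind_inf {D : Type} [AddCommGroup D] [Module ℝ D]
    (W₁ W₂ : Submodule ℝ D) (ξ : D) :
    ind (W₁ ⊓ W₂) ξ = ind W₁ ξ * ind W₂ ξ := by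
  by_cases h1 : ξ ∈ W₁ <;> by_cases h2 : ξ ∈ W₂ <;>
    simp [ind, Set.indicator_apply, Submodule.mem_inf, h1, h2]

/-- product of indicators of dual annihilators over a nonempty finset -/
private lemma prod_ind {V : Type} [AddCommGroup V] [Module ℝ V]
    (S : Finset (Submodule ℝ V)) (hS : S.Nonempty) (ξ : Module.Dual ℝ V) :
    ∏ L ∈ S, ind (Submodule.dualAnnihilator L) ξ
      = ind (Submodule.dualAnnihilator (S.sup id)) ξ := by
  induction hS using Finset.Nonempty.cons_induction with
  | singleton a => simp
  | cons a S ha hS ih =>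
      rw [Finset.prod_cons, ih, Finset.sup_cons, ← ind_inf,
        ← Submodule.dualAnnihilator_sup_eq]
      rfl

private lemma sup_mem_of_subset {V : Type} [AddCommGroup V] [Module ℝ V]
    {𝓛 : Finset (Submodule ℝ V)}
    (hsum : ∀ L₁ ∈ 𝓛, ∀ L₂ ∈ 𝓛, L₁ ⊔ L₂ ∈ 𝓛)
    {S : Finset (Submodule ℝ V)} (hS : S.Nonempty) (hsub : S ⊆ 𝓛) :
    S.sup id ∈ 𝓛 := by
  induction hS using Finset.Nonempty.cons_induction with
  | singleton a => simpa using hsub (by simp)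
  | cons a S ha hS ih =>
      rw [Finset.sup_cons]
      exact hsum a (hsub (Finset.mem_cons_self a S)) _
        (ih (fun x hx => hsub (Finset.mem_cons.2 (Or.inr hx))))

/-- A vector ξ of a subspace avoiding finitely many subspaces not containing the subspace. -/
private lemma exists_avoid {D : Type} [AddCommGroup D] [Module ℝ D]
    (W₀ : Submodule ℝ D) (s : Finset (Submodule ℝ D)) (h : ∀ W ∈ s, ¬ W₀ ≤ W) :
    ∃ ξ ∈ W₀, ∀ W ∈ s, ξ ∉ W := by
  classical
  set t : Finset (Submodule ℝ W₀) := s.image (fun W => W.comap W₀.subtype) with ht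
  have htop : ⊤ ∉ t := by
    simp only [ht, Finset.mem_image, not_exists]
    rintro W ⟨hW, heq⟩
    exact h W hW (Submodule.comap_subtype_eq_top.mp heq)
  have hne := Subspace.biUnion_ne_univ_of_top_notMem (s := t) htop
  obtain ⟨x, hx⟩ := (Set.ne_univ_iff_exists_notMem _).mp hne
  refine ⟨(x : D), x.2, fun W hW hmem => ?_⟩
  exact hx (Set.mem_biUnion (Finset.mem_image_of_mem _ hW)
    (by simpa [Submodule.mem_comap] using hmem))

private lemma coeffs_zero {V : Type} [AddCommGroup V] [Module ℝ V]
    (𝓛 : Finset (Submodule ℝ V)) (c : {L : Submodule ℝ V // L ∈ 𝓛} → ℝ)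
    (h : ∀ ξ : Module.Dual ℝ V,
      ∑ L ∈ 𝓛.attach, c L * ind (Submodule.dualAnnihilator (L : Submodule ℝ V)) ξ = 0) :
    ∀ L, c L = 0 := by
  classical
  by_contra hc
  push_neg at hc
  obtain ⟨L', hL'⟩ := hc
  set T : Finset {L : Submodule ℝ V // L ∈ 𝓛} := 𝓛.attach.filter (fun L => c L ≠ 0) with hT
  have hTne : T.Nonempty := ⟨L', by simp [hT, hL']⟩
  obtain ⟨L₀, hL₀T, hmin⟩ := T.exists_minimal hTne
  have hc₀ : c L₀ ≠ 0 := (Finset.mem_filter.mp hL₀T).2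
  -- the other annihilators to avoid
  set s : Finset (Submodule ℝ (Module.Dual ℝ V)) :=
    (T.erase L₀).image
      (fun L : {L : Submodule ℝ V // L ∈ 𝓛} => Submodule.dualAnnihilator L.1) with hs
  have hnotle : ∀ W ∈ s, ¬ Submodule.dualAnnihilator (L₀ : Submodule ℝ V) ≤ W := by
    intro W hW hle
    rw [hs] at hW
    obtain ⟨L, hLmem, rfl⟩ := Finset.mem_image.mp hW
    have hLT : L ∈ T := Finset.mem_of_mem_erase hLmem
    have hne : L ≠ L₀ := Finset.ne_of_mem_erase hLmem
    have hle' : (L : Submodule ℝ V) ≤ (L₀ : Submodule ℝ V) :=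
      Subspace.dualAnnihilator_le_dualAnnihilator_iff.mp hle
    have hlt : L < L₀ := lt_of_le_of_ne (Subtype.coe_le_coe.mp hle')
      hne
    exact absurd (hmin hLT hlt.le) (not_le_of_gt hlt)
  obtain ⟨ξ, hξmem, hξ⟩ := exists_avoid _ s hnotle
  have h0 := h ξ
  rw [Finset.sum_eq_single L₀ ?_ ?_] at h0
  · rw [ind_of_mem hξmem, mul_one] at h0
    exact hc₀ h0
  · intro b _ hbne
    by_cases hb : c b = 0
    · rw [hb, zero_mul]
    · have hbT : b ∈ T := by simp [hT, hb]
      have hmemimg : Submodule.dualAnnihilator (b : Submodule ℝ V) ∈ s := by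
        rw [hs]
        exact Finset.mem_image_of_mem
          (fun L : {L // L ∈ 𝓛} => Submodule.dualAnnihilator (L : Submodule ℝ V))
          (Finset.mem_erase.mpr ⟨hbne, hbT⟩)
      have : ξ ∉ Submodule.dualAnnihilator (b : Submodule ℝ V) := hξ _ hmemimg
      rw [ind_of_not_mem this, mul_zero]
  · intro hL₀
    exact absurd (Finset.mem_attach _ _) hL₀

theorem stmt_10
    (V : Type) [AddCommGroup V] [Module ℝ V] [FiniteDimensional ℝ V]
    -- 𝓛 is a finite family of subspaces closed under sums
    (𝓛 : Finset (Submodule ℝ V))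
    (hsum : ∀ L₁ ∈ 𝓛, ∀ L₂ ∈ 𝓛, L₁ ⊔ L₂ ∈ 𝓛) :
    -- there is a unique patching function ρ on 𝓛
    ∃! ρ : {L : Submodule ℝ V // L ∈ 𝓛} → ℝ,
      ∀ ξ : Module.Dual ℝ V,
        Set.indicator
          (⋃ L ∈ 𝓛, ((Submodule.dualAnnihilator L : Submodule ℝ (Module.Dual ℝ V)) :
            Set (Module.Dual ℝ V))) (fun _ => (1 : ℝ)) ξ =
        ∑ L ∈ 𝓛.attach,
          ρ L * Set.indicator
            (((L : Submodule ℝ V).dualAnnihilator : Submodule ℝ (Module.Dual ℝ V)) :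
              Set (Module.Dual ℝ V)) (fun _ => (1 : ℝ)) ξ := by
  classical
  set P : Finset (Finset (Submodule ℝ V)) := 𝓛.powerset.erase ∅ with hP
  set ρ : {L : Submodule ℝ V // L ∈ 𝓛} → ℝ := fun L =>
    ∑ S ∈ P.filter (fun S => S.sup id = (L : Submodule ℝ V)), (-1 : ℝ) ^ (S.card + 1)
    with hρ
  have hρprop : ∀ ξ : Module.Dual ℝ V,
      Set.indicator
        (⋃ L ∈ 𝓛, ((Submodule.dualAnnihilator L : Submodule ℝ (Module.Dual ℝ V)) :
          Set (Module.Dual ℝ V))) (fun _ => (1 : ℝ)) ξ =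
      ∑ L ∈ 𝓛.attach,
        ρ L * Set.indicator
          (((L : Submodule ℝ V).dualAnnihilator : Submodule ℝ (Module.Dual ℝ V)) :
            Set (Module.Dual ℝ V)) (fun _ => (1 : ℝ)) ξ := by
    intro ξ
    -- Step A: indicator of union = 1 - product
    have stepA : Set.indicator
        (⋃ L ∈ 𝓛, ((Submodule.dualAnnihilator L : Submodule ℝ (Module.Dual ℝ V)) :
          Set (Module.Dual ℝ V))) (fun _ => (1 : ℝ)) ξ
        = 1 - ∏ L ∈ 𝓛, (1 - ind (Submodule.dualAnnihilator L) ξ) := by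
      by_cases hmem : ξ ∈ ⋃ L ∈ 𝓛, ((Submodule.dualAnnihilator L :
          Submodule ℝ (Module.Dual ℝ V)) : Set (Module.Dual ℝ V))
      · rw [Set.indicator_of_mem hmem]
        obtain ⟨L, hL, hξL⟩ := Set.mem_iUnion₂.mp hmem
        rw [Finset.prod_eq_zero hL (by rw [ind_of_mem hξL]; ring)]
        ring
      · rw [Set.indicator_of_notMem hmem]
        have hone : ∀ L ∈ 𝓛, 1 - ind (Submodule.dualAnnihilator L) ξ = 1 := by
          intro L hL
          have : ξ ∉ (Submodule.dualAnnihilator L : Set (Module.Dual ℝ V)) := by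
            intro hξL
            exact hmem (Set.mem_iUnion₂.mpr ⟨L, hL, hξL⟩)
          rw [ind_of_not_mem this]; ring
        rw [Finset.prod_congr rfl hone, Finset.prod_const_one]; ring
    -- Step B: expand product
    have stepB : ∏ L ∈ 𝓛, (1 - ind (Submodule.dualAnnihilator L) ξ)
        = ∑ S ∈ 𝓛.powerset, (-1 : ℝ) ^ S.card * ∏ L ∈ S, ind (Submodule.dualAnnihilator L) ξ := by
      have := Finset.prod_add (fun L => -ind (Submodule.dualAnnihilator L) ξ)
        (fun _ => (1 : ℝ)) 𝓛
      simp only [Finset.prod_const_one, mul_one] at this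
      calc ∏ L ∈ 𝓛, (1 - ind (Submodule.dualAnnihilator L) ξ)
          = ∏ L ∈ 𝓛, (-ind (Submodule.dualAnnihilator L) ξ + 1) := by
            apply Finset.prod_congr rfl; intros; ring
        _ = ∑ S ∈ 𝓛.powerset, ∏ L ∈ S, (-ind (Submodule.dualAnnihilator L) ξ) := this
        _ = _ := by
            apply Finset.sum_congr rfl; intro S _
            calc ∏ L ∈ S, (-ind (Submodule.dualAnnihilator L) ξ)
                = ∏ L ∈ S, ((-1 : ℝ) * ind (Submodule.dualAnnihilator L) ξ) := by
                  apply Finset.prod_congr rfl; intros; ring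
              _ = (-1 : ℝ) ^ S.card * ∏ L ∈ S, ind (Submodule.dualAnnihilator L) ξ := by
                  rw [Finset.prod_mul_distrib, Finset.prod_const]
    -- Step C: split off empty set
    have stepC : ∑ S ∈ 𝓛.powerset, (-1 : ℝ) ^ S.card *
          ∏ L ∈ S, ind (Submodule.dualAnnihilator L) ξ
        = 1 + ∑ S ∈ P, (-1 : ℝ) ^ S.card * ∏ L ∈ S, ind (Submodule.dualAnnihilator L) ξ := by
      rw [← Finset.add_sum_erase _ _ (Finset.empty_mem_powerset 𝓛)]
      simp [hP]
    rw [stepA, stepB, stepC]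
    -- Step D: regroup
    have key : ∀ S ∈ P, ∏ L ∈ S, ind (Submodule.dualAnnihilator L) ξ
        = ind (Submodule.dualAnnihilator (S.sup id)) ξ := by
      intro S hS
      have hSne : S.Nonempty :=
        Finset.nonempty_iff_ne_empty.mpr (Finset.ne_of_mem_erase hS)
      exact prod_ind S hSne ξ
    have hmaps : ∀ S ∈ P, S.sup id ∈ 𝓛 := by
      intro S hS
      have hSne : S.Nonempty :=
        Finset.nonempty_iff_ne_empty.mpr (Finset.ne_of_mem_erase hS)
      exact sup_mem_of_subset hsum hSne
        (Finset.mem_powerset.mp (Finset.mem_of_mem_erase hS))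
    have regroup : ∑ S ∈ P, (-1 : ℝ) ^ (S.card + 1) *
          ind (Submodule.dualAnnihilator (S.sup id)) ξ
        = ∑ L ∈ 𝓛.attach, ρ L * ind (Submodule.dualAnnihilator (L : Submodule ℝ V)) ξ := by
      rw [Finset.sum_attach 𝓛
        (fun M => (∑ S ∈ P.filter (fun S => S.sup id = M), (-1 : ℝ) ^ (S.card + 1)) *
          ind (Submodule.dualAnnihilator M) ξ)]
      rw [← Finset.sum_fiberwise_of_maps_to hmaps
        (fun S => (-1 : ℝ) ^ (S.card + 1) * ind (Submodule.dualAnnihilator (S.sup id)) ξ)]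
      apply Finset.sum_congr rfl
      intro M _
      rw [Finset.sum_mul]
      apply Finset.sum_congr rfl
      intro S hS
      rw [(Finset.mem_filter.mp hS).2]
    calc 1 - (1 + ∑ S ∈ P, (-1 : ℝ) ^ S.card * ∏ L ∈ S, ind (Submodule.dualAnnihilator L) ξ)
        = ∑ S ∈ P, (-1 : ℝ) ^ (S.card + 1) * ∏ L ∈ S, ind (Submodule.dualAnnihilator L) ξ := by
          have hneg : ∀ S ∈ P, (-1 : ℝ) ^ (S.card + 1) *
              ∏ L ∈ S, ind (Submodule.dualAnnihilator L) ξ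
              = -((-1 : ℝ) ^ S.card * ∏ L ∈ S, ind (Submodule.dualAnnihilator L) ξ) := by
            intro S _; ring
          rw [Finset.sum_congr rfl hneg, Finset.sum_neg_distrib]
          ring
      _ = ∑ S ∈ P, (-1 : ℝ) ^ (S.card + 1) * ind (Submodule.dualAnnihilator (S.sup id)) ξ := by
          exact Finset.sum_congr rfl (fun S hS => by rw [key S hS])
      _ = _ := regroup
  refine ⟨ρ, hρprop, ?_⟩
  intro ρ' hρ'
  have hzero : ∀ ξ : Module.Dual ℝ V,
      ∑ L ∈ 𝓛.attach,
        (ρ' L - ρ L) * ind (Submodule.dualAnnihilator (L : Submodule ℝ V)) ξ = 0 := by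
    intro ξ
    have := (hρ' ξ).symm.trans (hρprop ξ)
    simp only [sub_mul, Finset.sum_sub_distrib]
    rw [show ∀ x:ℝ, ∀ y:ℝ, x = y → x - y = 0 from fun x y h => by rw [h, sub_self]]
    exact this
  have := coeffs_zero 𝓛 (fun L => ρ' L - ρ L) hzero
  funext L
  have hL : ρ' L - ρ L = 0 := this L
  linarith
end

section
/- Let V be a finite-dimensional real vector space, let 𝓛 be a finite family of linear subspaces of V closed under sums, and let ρ : 𝓛 → ℝ be its patching function. Order 𝓛 by inclusion and let 𝓛̂ be the finite poset obtained by adjoining to 𝓛 a new least element 0̂ (with 0̂ strictly below every element of 𝓛). Then for every L ∈ 𝓛, ρ(L) = −μ(0̂, L), where μ denotes the Möbius function of the finite poset 𝓛̂. -/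
open scoped Classical

theorem stmt_11
    (V : Type) [AddCommGroup V] [Module ℝ V] [FiniteDimensional ℝ V]
    -- 𝓛 is a finite family of subspaces closed under sums
    (𝓛 : Finset (Submodule ℝ V))
    (hsum : ∀ L₁ ∈ 𝓛, ∀ L₂ ∈ 𝓛, L₁ ⊔ L₂ ∈ 𝓛)
    -- ρ is the patching function of 𝓛
    (ρ : Submodule ℝ V → ℝ)
    (hρ : ∀ ξ : Module.Dual ℝ V,
      Set.indicator
        (⋃ L ∈ 𝓛, ((Submodule.dualAnnihilator L : Submodule ℝ (Module.Dual ℝ V)) :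
          Set (Module.Dual ℝ V))) (fun _ => (1 : ℝ)) ξ =
      ∑ L ∈ 𝓛,
        ρ L * Set.indicator
          ((L.dualAnnihilator : Submodule ℝ (Module.Dual ℝ V)) :
            Set (Module.Dual ℝ V)) (fun _ => (1 : ℝ)) ξ)
    -- mu is the Möbius function of the poset 𝓛̂ = 𝓛 ∪ {0̂} (0̂ a new least element,
    -- realized as ⊥ in `WithBot`):  mu(a,a) = 1, Σ_{a ≤ c ≤ b} mu(a,c) = 0 for a < b,
    -- and mu(a,b) = 0 unless a ≤ b
    (mu : WithBot {L : Submodule ℝ V // L ∈ 𝓛} → WithBot {L : Submodule ℝ V // L ∈ 𝓛} → ℝ)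
    (hmu_refl : ∀ a, mu a a = 1)
    (hmu_sum : ∀ a b, a < b → ∑ᶠ c ∈ Set.Icc a b, mu a c = 0)
    (hmu_zero : ∀ a b, ¬a ≤ b → mu a b = 0) :
    -- ρ(L) = −mu(0̂, L) for every L ∈ 𝓛
    ∀ (L : Submodule ℝ V) (hL : L ∈ 𝓛),
      ρ L = -mu ⊥ ((⟨L, hL⟩ : {L : Submodule ℝ V // L ∈ 𝓛}) : WithBot _) := by
  classical
  -- Step A : the triangular system satisfied by ρ
  have key : ∀ x : {L : Submodule ℝ V // L ∈ 𝓛}, ∑ m ∈ Finset.univ.filter (fun m : {L : Submodule ℝ V // L ∈ 𝓛} => m ≤ x), ρ m.val = 1 := by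
    intro x
    obtain ⟨L, hL⟩ := x
    -- find a generic ξ in L^⊥
    set W := L.dualAnnihilator with hW
    set T : Finset (Subspace ℝ W) :=
      (𝓛.filter (fun M => ¬ M ≤ L)).image
        (fun M => (M.dualAnnihilator).comap W.subtype) with hT
    have htop : ⊤ ∉ T := by
      intro h
      rw [hT, Finset.mem_image] at h
      obtain ⟨M, hM, hMeq⟩ := h
      rw [Finset.mem_filter] at hM
      have hle : W ≤ M.dualAnnihilator := Submodule.comap_subtype_eq_top.mp hMeq
      exact hM.2 (Subspace.dualAnnihilator_le_dualAnnihilator_iff.mp hle)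
    have hne := Subspace.biUnion_ne_univ_of_top_notMem htop
    obtain ⟨ξ0, hξ0⟩ := (Set.ne_univ_iff_exists_notMem _).mp hne
    have hξ0' : ∀ p ∈ T, ξ0 ∉ p := by
      intro p hp hmem
      exact hξ0 (Set.mem_biUnion hp hmem)
    set ξ : Module.Dual ℝ V := (ξ0 : Module.Dual ℝ V) with hξ
    have hξW : ξ ∈ W := ξ0.2
    have hnot : ∀ M ∈ 𝓛, ¬ M ≤ L → ξ ∉ M.dualAnnihilator := by
      intro M hM hMle hmem
      refine hξ0' ((M.dualAnnihilator).comap W.subtype) ?_ ?_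
      · rw [hT, Finset.mem_image]
        exact ⟨M, Finset.mem_filter.mpr ⟨hM, hMle⟩, rfl⟩
      · exact hmem
    have hmem : ξ ∈ ⋃ M ∈ 𝓛, ((Submodule.dualAnnihilator M : Submodule ℝ (Module.Dual ℝ V)) :
        Set (Module.Dual ℝ V)) := Set.mem_biUnion hL hξW
    have h1 : (1 : ℝ) = ∑ M ∈ 𝓛,
        ρ M * Set.indicator
          ((M.dualAnnihilator : Submodule ℝ (Module.Dual ℝ V)) :
            Set (Module.Dual ℝ V)) (fun _ => (1 : ℝ)) ξ := by
      rw [← hρ ξ, Set.indicator_of_mem hmem]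
    rw [← Finset.sum_coe_sort 𝓛] at h1
    rw [← Finset.sum_filter_add_sum_filter_not (Finset.univ : Finset {L : Submodule ℝ V // L ∈ 𝓛})
      (fun m : {L : Submodule ℝ V // L ∈ 𝓛} => m ≤ ⟨L, hL⟩)] at h1
    have h2 : ∀ m ∈ Finset.univ.filter (fun m : {L : Submodule ℝ V // L ∈ 𝓛} => m ≤ ⟨L, hL⟩),
        ρ m.val * Set.indicator
          ((m.val.dualAnnihilator : Submodule ℝ (Module.Dual ℝ V)) :
            Set (Module.Dual ℝ V)) (fun _ => (1 : ℝ)) ξ = ρ m.val := by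
      intro m hm
      rw [Finset.mem_filter] at hm
      have hmle : m.val ≤ L := hm.2
      have : ξ ∈ m.val.dualAnnihilator := Submodule.dualAnnihilator_anti hmle hξW
      rw [Set.indicator_of_mem this, mul_one]
    have h3 : ∀ m ∈ Finset.univ.filter (fun m : {L : Submodule ℝ V // L ∈ 𝓛} => ¬ m ≤ ⟨L, hL⟩),
        ρ m.val * Set.indicator
          ((m.val.dualAnnihilator : Submodule ℝ (Module.Dual ℝ V)) :
            Set (Module.Dual ℝ V)) (fun _ => (1 : ℝ)) ξ = 0 := by
      intro m hm
      rw [Finset.mem_filter] at hm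
      have : ξ ∉ m.val.dualAnnihilator := hnot m.val m.2 hm.2
      rw [Set.indicator_of_notMem this, mul_zero]
    rw [Finset.sum_congr rfl h2, Finset.sum_congr rfl h3, Finset.sum_const_zero,
      add_zero] at h1
    exact h1.symm
  -- Step B : the same system for -mu
  have mukey : ∀ x : {L : Submodule ℝ V // L ∈ 𝓛},
      1 + ∑ m ∈ Finset.univ.filter (fun m : {L : Submodule ℝ V // L ∈ 𝓛} => m ≤ x), mu ⊥ (↑m : WithBot {L : Submodule ℝ V // L ∈ 𝓛}) = 0 := by
    intro x
    have hlt : (⊥ : WithBot {L : Submodule ℝ V // L ∈ 𝓛}) < ↑x := WithBot.bot_lt_coe x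
    have h := hmu_sum ⊥ ↑x hlt
    have hset : Set.Icc (⊥ : WithBot {L : Submodule ℝ V // L ∈ 𝓛}) ↑x =
        ↑(insert (⊥ : WithBot {L : Submodule ℝ V // L ∈ 𝓛})
          ((Finset.univ.filter (fun m : {L : Submodule ℝ V // L ∈ 𝓛} => m ≤ x)).image
            (fun m : {L : Submodule ℝ V // L ∈ 𝓛} => (↑m : WithBot {L : Submodule ℝ V // L ∈ 𝓛})))) := by
      ext c
      simp only [Set.mem_Icc, bot_le, true_and, Finset.coe_insert, Set.mem_insert_iff,
        Finset.coe_image, Set.mem_image, Finset.mem_coe, Finset.mem_filter, Finset.mem_univ,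
        true_and]
      cases c with
      | bot => simp
      | coe m =>
        constructor
        · intro hc
          right
          exact ⟨m, WithBot.coe_le_coe.mp hc, rfl⟩
        · intro hc
          rcases hc with hc | ⟨a, ha, hac⟩
          · exact absurd hc (by simp)
          · rw [← hac]
            exact WithBot.coe_le_coe.mpr ha
    rw [hset, finsum_mem_coe_finset, Finset.sum_insert (by
        simp only [Finset.mem_image, Finset.mem_filter, Finset.mem_univ, true_and]
        rintro ⟨a, -, ha⟩
        exact (WithBot.coe_ne_bot ha)),
      Finset.sum_image (fun a _ b _ hab => WithBot.coe_injective hab),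
      hmu_refl ⊥] at h
    exact h
  -- Step C : induction on dimension
  have main : ∀ n : ℕ, ∀ y : {L : Submodule ℝ V // L ∈ 𝓛}, Module.finrank ℝ y.val = n →
      ρ y.val = -mu ⊥ (↑y : WithBot {L : Submodule ℝ V // L ∈ 𝓛}) := by
    intro n
    induction n using Nat.strong_induction_on with
    | _ n ih =>
      intro y hy
      have hsplit : Finset.univ.filter (fun m : {L : Submodule ℝ V // L ∈ 𝓛} => m ≤ y) =
          insert y (Finset.univ.filter (fun m : {L : Submodule ℝ V // L ∈ 𝓛} => m < y)) := by
        ext m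
        simp only [Finset.mem_filter, Finset.mem_univ, true_and, Finset.mem_insert]
        constructor
        · intro hm
          rcases lt_or_eq_of_le hm with h | h
          · exact Or.inr h
          · exact Or.inl h
        · rintro (rfl | h)
          · exact le_rfl
          · exact le_of_lt h
      have hynot : y ∉ Finset.univ.filter (fun m : {L : Submodule ℝ V // L ∈ 𝓛} => m < y) := by
        simp
      have hk := key y
      have hm := mukey y
      rw [hsplit, Finset.sum_insert hynot] at hk hm
      have hcong : ∑ m ∈ Finset.univ.filter (fun m : {L : Submodule ℝ V // L ∈ 𝓛} => m < y), ρ m.val =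
          ∑ m ∈ Finset.univ.filter (fun m : {L : Submodule ℝ V // L ∈ 𝓛} => m < y), -mu ⊥ (↑m : WithBot {L : Submodule ℝ V // L ∈ 𝓛}) := by
        refine Finset.sum_congr rfl ?_
        intro m hmem
        rw [Finset.mem_filter] at hmem
        have hlt : m.val < y.val := hmem.2
        have hrk : Module.finrank ℝ m.val < n := by
          rw [← hy]
          exact Submodule.finrank_lt_finrank_of_lt hlt
        exact ih _ hrk m rfl
      rw [hcong] at hk
      rw [Finset.sum_neg_distrib] at hk
      linarith
  intro L hL
  exact main (Module.finrank ℝ L) ⟨L, hL⟩ rfl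
end

section
/- Let V be a d-dimensional real vector space, let v_1, …, v_d be a basis of V, and let k be an integer with 0 ≤ k ≤ d − 1. For I ⊆ {1, …, d}, let L_I be the linear span of {v_i : i ∈ I}. Then, as functions on the dual space V*, 𝟙_{⋃_{|I| ≥ d−k} L_I^⊥} = Σ_{I ⊆ {1,…,d}, |I| ≥ d−k} (−1)^{|I| − (d−k)} · C(|I| − 1, d − k − 1) · 𝟙_{L_I^⊥}, where C(a, b) denotes the binomial coefficient. Equivalently, the family {L_I : |I| ≥ d − k} is closed under sums and its patching function is ρ(L_I) = (−1)^{|I| − d + k}·C(|I| − 1, d − k − 1). -/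
open Finset

lemma alt_sum_real (n : ℕ) :
    ∑ t ∈ range (n + 1), (-1 : ℝ) ^ t * (n.choose t : ℝ) = if n = 0 then 1 else 0 := by
  have h := Int.alternating_sum_range_choose (n := n)
  have h2 : ((∑ m ∈ range (n + 1), ((-1) ^ m * n.choose m : ℤ) : ℤ) : ℝ)
      = ((if n = 0 then 1 else 0 : ℤ) : ℝ) := by rw [h]
  push_cast at h2
  simpa using h2

lemma lem1_sum (a z : ℕ) (h : a ≤ z) :
    ∑ i ∈ Finset.Icc a z, (-1 : ℝ) ^ (i - a) * (z.choose i : ℝ) * (i.choose a : ℝ)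
      = if z = a then 1 else 0 := by
  rw [← Finset.Ico_add_one_right_eq_Icc, Finset.sum_Ico_eq_sum_range]
  have hzr : z + 1 - a = (z - a) + 1 := by omega
  rw [hzr]
  have key : ∀ t ∈ range ((z - a) + 1),
      (-1 : ℝ) ^ (a + t - a) * (z.choose (a + t) : ℝ) * ((a + t).choose a : ℝ)
        = (z.choose a : ℝ) * ((-1 : ℝ) ^ t * ((z - a).choose t : ℝ)) := by
    intro t ht
    rw [mem_range] at ht
    have hle : a + t ≤ z := by omega
    have hmul : z.choose (a + t) * (a + t).choose a = z.choose a * (z - a).choose t := by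
      rw [Nat.choose_mul (n := z) (Nat.le_add_right a t)]
      congr 1
      · congr 1; omega
    have h4 : (a + t - a) = t := by omega
    have hmulR : (z.choose (a + t) : ℝ) * ((a + t).choose a : ℝ)
        = (z.choose a : ℝ) * ((z - a).choose t : ℝ) := by exact_mod_cast congrArg Nat.cast hmul
    rw [h4]
    calc (-1 : ℝ) ^ t * (z.choose (a + t) : ℝ) * ((a + t).choose a : ℝ)
        = (-1 : ℝ) ^ t * ((z.choose (a + t) : ℝ) * ((a + t).choose a : ℝ)) := by ring
      _ = (-1 : ℝ) ^ t * ((z.choose a : ℝ) * ((z - a).choose t : ℝ)) := by rw [hmulR]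
      _ = (z.choose a : ℝ) * ((-1 : ℝ) ^ t * ((z - a).choose t : ℝ)) := by ring
  rw [Finset.sum_congr rfl key, ← Finset.mul_sum, alt_sum_real]
  by_cases hz : z = a
  · simp [hz]
  · have : z - a ≠ 0 := by omega
    simp [hz, this]

lemma lemA_sum (m : ℕ) (hm : 1 ≤ m) (z : ℕ) (hz : m ≤ z) :
    ∑ j ∈ Finset.Icc m z,
      (-1 : ℝ) ^ (j - m) * (z.choose j : ℝ) * ((j - 1).choose (m - 1) : ℝ) = 1 := by
  obtain ⟨m', rfl⟩ : ∃ m', m = m' + 1 := ⟨m - 1, by omega⟩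
  induction z, hz using Nat.le_induction with
  | base => simp
  | succ z hz ih =>
    have hmap : Finset.Icc (m' + 1) (z + 1) = (Finset.Icc m' z).map (addRightEmbedding 1) := by
      rw [Finset.map_add_right_Icc]
    rw [hmap, Finset.sum_map]
    have key : ∀ i ∈ Finset.Icc m' z,
        (-1 : ℝ) ^ (addRightEmbedding 1 i - (m' + 1)) *
            ((z + 1).choose (addRightEmbedding 1 i) : ℝ) *
            ((addRightEmbedding 1 i - 1).choose (m' + 1 - 1) : ℝ)
          = (-1 : ℝ) ^ (i - m') * (z.choose i : ℝ) * (i.choose m' : ℝ)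
            + (-1 : ℝ) ^ ((i + 1) - (m' + 1)) * (z.choose (i + 1) : ℝ)
              * (((i + 1) - 1).choose ((m' + 1) - 1) : ℝ) := by
      intro i hi
      simp only [addRightEmbedding_apply]
      have h1 : i + 1 - (m' + 1) = i - m' := by omega
      have h2 : i + 1 - 1 = i := by omega
      have h3 : m' + 1 - 1 = m' := by omega
      rw [h1, h2, h3]
      have := Nat.choose_succ_succ z i
      rw [this]
      push_cast
      ring
    rw [Finset.sum_congr rfl key, Finset.sum_add_distrib]
    have hfirst : ∑ i ∈ Finset.Icc m' z,
        (-1 : ℝ) ^ (i - m') * (z.choose i : ℝ) * (i.choose m' : ℝ) = 0 := by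
      rw [lem1_sum m' z (by omega)]
      have : z ≠ m' := by omega
      simp [this]
    rw [hfirst, zero_add]
    -- second sum: map back to Icc (m'+1) (z+1), top term vanishes
    have hback : ∑ i ∈ Finset.Icc m' z,
        (-1 : ℝ) ^ ((i + 1) - (m' + 1)) * (z.choose (i + 1) : ℝ)
          * (((i + 1) - 1).choose ((m' + 1) - 1) : ℝ)
        = ∑ j ∈ Finset.Icc (m' + 1) (z + 1),
        (-1 : ℝ) ^ (j - (m' + 1)) * (z.choose j : ℝ) * ((j - 1).choose ((m' + 1) - 1) : ℝ) := by
      rw [hmap, Finset.sum_map]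
      simp only [addRightEmbedding_apply]
    rw [hback]
    have hsplit : Finset.Icc (m' + 1) (z + 1) = insert (z + 1) (Finset.Icc (m' + 1) z) :=
      (Finset.insert_Icc_right_eq_Icc_add_one (by omega)).symm
    rw [hsplit, Finset.sum_insert (by simp), ih]
    have : z.choose (z + 1) = 0 := Nat.choose_eq_zero_of_lt (by omega)
    simp [this]

theorem stmt_12
    (V : Type) [AddCommGroup V] [Module ℝ V]
    (d k : ℕ) (hk : k + 1 ≤ d)
    -- v is a basis of the d-dimensional space V
    (v : Module.Basis (Fin d) ℝ V)
    -- L I is the span of the basis vectors indexed by I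
    (L : Finset (Fin d) → Submodule ℝ V)
    (hL : ∀ I, L I = Submodule.span ℝ (v '' (↑I : Set (Fin d)))) :
    -- the indicator identity on the dual space
    (∀ ξ : Module.Dual ℝ V,
      Set.indicator
        (⋃ I ∈ {I : Finset (Fin d) | d - k ≤ I.card},
          (((L I).dualAnnihilator : Submodule ℝ (Module.Dual ℝ V)) :
            Set (Module.Dual ℝ V))) (fun _ => (1 : ℝ)) ξ =
      ∑ I ∈ Finset.univ.filter (fun I : Finset (Fin d) => d - k ≤ I.card),
        (-1 : ℝ) ^ (I.card - (d - k)) * ((I.card - 1).choose (d - k - 1)) *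
          Set.indicator
            (((L I).dualAnnihilator : Submodule ℝ (Module.Dual ℝ V)) :
              Set (Module.Dual ℝ V)) (fun _ => (1 : ℝ)) ξ) ∧
    -- equivalently: the family {L_I : |I| ≥ d − k} is closed under sums, with the above
    -- patching function
    (∀ I J : Finset (Fin d), d - k ≤ I.card → d - k ≤ J.card →
      ∃ K : Finset (Fin d), d - k ≤ K.card ∧ L I ⊔ L J = L K) := by
  classical
  set m := d - k with hm_def
  have hm : 1 ≤ m := by omega
  have mem_ann : ∀ (ξ : Module.Dual ℝ V) (I : Finset (Fin d)),
      ξ ∈ (L I).dualAnnihilator ↔ ∀ i ∈ I, ξ (v i) = 0 := by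
    intro ξ I
    rw [hL, Submodule.mem_dualAnnihilator]
    constructor
    · intro h i hi; exact h _ (Submodule.subset_span ⟨i, hi, rfl⟩)
    · intro h w hw
      have hle : Submodule.span ℝ (v '' (↑I : Set (Fin d))) ≤ LinearMap.ker ξ := by
        rw [Submodule.span_le]; rintro _ ⟨i, hi, rfl⟩; exact h i hi
      exact hle hw
  constructor
  · intro ξ
    set Z : Finset (Fin d) := Finset.univ.filter (fun i => ξ (v i) = 0) with hZ_def
    have hmemZ : ∀ I : Finset (Fin d), ξ ∈ (L I).dualAnnihilator ↔ I ⊆ Z := by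
      intro I
      rw [mem_ann]
      constructor
      · intro h i hi; simp [hZ_def, h i hi]
      · intro h i hi; have := h hi; simp [hZ_def] at this; exact this
    -- rewrite each indicator
    have hind : ∀ I : Finset (Fin d),
        Set.indicator (((L I).dualAnnihilator : Submodule ℝ (Module.Dual ℝ V)) :
          Set (Module.Dual ℝ V)) (fun _ => (1 : ℝ)) ξ = if I ⊆ Z then 1 else 0 := by
      intro I
      rw [Set.indicator_apply]
      congr 1
      simp only [SetLike.mem_coe, eq_iff_iff]
      exact hmemZ I
    -- LHS
    have hLHS : Set.indicator
        (⋃ I ∈ {I : Finset (Fin d) | m ≤ I.card},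
          (((L I).dualAnnihilator : Submodule ℝ (Module.Dual ℝ V)) :
            Set (Module.Dual ℝ V))) (fun _ => (1 : ℝ)) ξ
        = if m ≤ Z.card then 1 else 0 := by
      rw [Set.indicator_apply]
      congr 1
      simp only [Set.mem_iUnion, SetLike.mem_coe, Set.mem_setOf_eq, eq_iff_iff]
      constructor
      · rintro ⟨I, hI, hξ⟩
        exact le_trans hI (Finset.card_le_card ((hmemZ I).1 hξ))
      · intro h
        exact ⟨Z, h, (hmemZ Z).2 (Finset.Subset.refl Z)⟩
    rw [hLHS]
    -- RHS
    have hRHS : ∑ I ∈ Finset.univ.filter (fun I : Finset (Fin d) => m ≤ I.card),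
        (-1 : ℝ) ^ (I.card - m) * (((I.card - 1).choose (m - 1) : ℕ) : ℝ) *
          Set.indicator (((L I).dualAnnihilator : Submodule ℝ (Module.Dual ℝ V)) :
            Set (Module.Dual ℝ V)) (fun _ => (1 : ℝ)) ξ
        = ∑ I ∈ Z.powerset,
            (if m ≤ I.card then
              (-1 : ℝ) ^ (I.card - m) * (((I.card - 1).choose (m - 1) : ℕ) : ℝ) else 0) := by
      rw [show Z.powerset = Finset.univ.filter (fun I : Finset (Fin d) => I ⊆ Z) by
          ext I; simp]
      rw [Finset.sum_filter, Finset.sum_filter]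
      apply Finset.sum_congr rfl
      intro I _
      rw [hind I]
      by_cases h1 : m ≤ I.card <;> by_cases h2 : I ⊆ Z <;> simp [h1, h2]
    rw [hRHS]
    rw [Finset.sum_powerset_apply_card
      (f := fun j => if m ≤ j then (-1 : ℝ) ^ (j - m) * (((j - 1).choose (m - 1) : ℕ) : ℝ) else 0)]
    have hstep : ∀ j ∈ range (Z.card + 1),
        (Z.card.choose j) •
          (if m ≤ j then (-1 : ℝ) ^ (j - m) * (((j - 1).choose (m - 1) : ℕ) : ℝ) else 0)
        = if m ≤ j then
            (-1 : ℝ) ^ (j - m) * ((Z.card.choose j : ℕ) : ℝ) * (((j - 1).choose (m - 1) : ℕ) : ℝ)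
          else 0 := by
      intro j _
      by_cases h : m ≤ j <;> simp [h, nsmul_eq_mul] <;> ring
    rw [Finset.sum_congr rfl hstep, ← Finset.sum_filter]
    have hfil : (range (Z.card + 1)).filter (fun j => m ≤ j) = Finset.Icc m Z.card := by
      ext j; simp [Nat.lt_succ_iff]; omega
    rw [hfil]
    by_cases hcase : m ≤ Z.card
    · rw [lemA_sum m hm Z.card hcase, if_pos hcase]
    · rw [if_neg hcase]
      rw [Finset.Icc_eq_empty (by omega)]
      simp
  · intro I J hI hJ
    refine ⟨I ∪ J, le_trans hI (Finset.card_le_card Finset.subset_union_left), ?_⟩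
    rw [hL, hL, hL, ← Submodule.span_union, Finset.coe_union, Set.image_union]
end

section
/- Let π : ℝ^N → ℝ^N/μ(ℝ^d) be the quotient map onto the quotient vector space by the image of μ, and let φ_j = π(e_j) for j = 1, …, N. Then for every B ∈ 𝓑: (a) the image π(d_B) equals the cone {Σ_{k ∉ B} c_k·φ_k : c_k ≥ 0 for all k ∉ B}; and (b) the vectors (φ_k)_{k ∉ B} are linearly independent in ℝ^N/μ(ℝ^d), so this cone is simplicial. -/
theorem stmt_17
    (d N : ℕ) (hd : 1 ≤ d) (hN : 1 ≤ N)
    (μ : Fin N → ((Fin d → ℝ) →ₗ[ℝ] ℝ))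
    -- μ as a linear map ℝ^d → ℝ^N
    (μmap : (Fin d → ℝ) →ₗ[ℝ] (Fin N → ℝ))
    (hμmap : ∀ x j, μmap x j = μ j x)
    (P : (Fin N → ℝ) → Set (Fin d → ℝ))
    (hP : ∀ b, P b = {x | ∀ j, μ j x ≤ b j})
    (𝓑 : Set (Finset (Fin N)))
    (h𝓑 : ∀ B : Finset (Fin N), B ∈ 𝓑 ↔
      (LinearIndependent ℝ (fun j : {j // j ∈ B} => μ j.1) ∧
        Submodule.span ℝ (Set.range (fun j : {j // j ∈ B} => μ j.1)) = ⊤))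
    (sB : Finset (Fin N) → ((Fin N → ℝ) →ₗ[ℝ] (Fin d → ℝ)))
    (hsB : ∀ B ∈ 𝓑, ∀ b : Fin N → ℝ, ∀ j ∈ B, μ j (sB B b) = b j)
    (dB : Finset (Fin N) → Set (Fin N → ℝ))
    (hdB : ∀ B, dB B = {b | ∀ k ∉ B, μ k (sB B b) ≤ b k})
    -- φ_j is the image of e_j in the quotient ℝ^N / μ(ℝ^d)
    (φ : Fin N → ((Fin N → ℝ) ⧸ LinearMap.range μmap))
    (hφ : ∀ j, φ j = (LinearMap.range μmap).mkQ ((Pi.single j (1 : ℝ)) : Fin N → ℝ))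
    (B : Finset (Fin N)) (hB : B ∈ 𝓑) :
    -- (a) the projection of d_B is the cone generated by the φ_k, k ∉ B
    ((LinearMap.range μmap).mkQ '' dB B =
      {y | ∃ c : Fin N → ℝ, (∀ k ∉ B, 0 ≤ c k) ∧ y = ∑ k ∈ Bᶜ, c k • φ k}) ∧
    -- (b) the vectors (φ_k)_{k ∉ B} are linearly independent
    LinearIndependent ℝ (fun k : {k : Fin N // k ∉ B} => φ k.1) := by
  obtain ⟨hli, hsp⟩ := (h𝓑 B).mp hB
  -- Any vector killed by all μ j, j ∈ B, is zero
  have hzero : ∀ x : Fin d → ℝ, (∀ j ∈ B, μ j x = 0) → x = 0 := by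
    intro x hx
    have hall : ∀ f : (Fin d → ℝ) →ₗ[ℝ] ℝ, f x = 0 := by
      intro f
      have hf : f ∈ Submodule.span ℝ (Set.range fun j : {j // j ∈ B} => μ j.1) := by
        rw [hsp]; trivial
      induction hf using Submodule.span_induction with
      | mem g hg => obtain ⟨⟨j, hj⟩, rfl⟩ := hg; exact hx j hj
      | zero => simp
      | add g h _ _ hg hh => simp [hg, hh]
      | smul c g _ hg => simp [hg]
    funext i
    simpa using hall (LinearMap.proj i)
  have hsB0 : ∀ b : Fin N → ℝ, (∀ j ∈ B, b j = 0) → sB B b = 0 := by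
    intro b hb
    exact hzero _ (fun j hj => by rw [hsB B hB b j hj]; exact hb j hj)
  have hsum : ∀ (a : Fin N → ℝ) (j : Fin N),
      (∑ k ∈ Bᶜ, a k • (Pi.single k (1:ℝ) : Fin N → ℝ)) j
        = if j ∈ B then 0 else a j := by
    intro a j
    rw [Finset.sum_apply]
    simp only [Pi.smul_apply, Pi.single_apply, smul_eq_mul, mul_ite, mul_one, mul_zero]
    rw [Finset.sum_ite_eq]
    by_cases hj : j ∈ B <;> simp [hj]
  have hq0 : ∀ x, (LinearMap.range μmap).mkQ (μmap x) = 0 := by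
    intro x
    rw [Submodule.mkQ_apply, Submodule.Quotient.mk_eq_zero]
    exact ⟨x, rfl⟩
  have hπsum : ∀ a : Fin N → ℝ,
      (LinearMap.range μmap).mkQ (∑ k ∈ Bᶜ, a k • (Pi.single k (1:ℝ) : Fin N → ℝ))
        = ∑ k ∈ Bᶜ, a k • φ k := by
    intro a
    rw [map_sum]
    exact Finset.sum_congr rfl fun k _ => by rw [map_smul, hφ k]
  constructor
  · ext y
    constructor
    · rintro ⟨b, hb, rfl⟩
      rw [hdB] at hb
      refine ⟨fun k => b k - μ k (sB B b), fun k hk => sub_nonneg.mpr (hb k hk), ?_⟩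
      have key : b = μmap (sB B b)
          + ∑ k ∈ Bᶜ, (b k - μ k (sB B b)) • (Pi.single k (1:ℝ) : Fin N → ℝ) := by
        funext j
        rw [Pi.add_apply, hsum, hμmap]
        by_cases hj : j ∈ B
        · simp [hj, hsB B hB b j hj]
        · simp [hj]
      conv_lhs => rw [key]
      rw [map_add, hq0, zero_add, hπsum]
    · rintro ⟨c, hc, rfl⟩
      refine ⟨∑ k ∈ Bᶜ, c k • (Pi.single k (1:ℝ) : Fin N → ℝ), ?_, hπsum c⟩
      rw [hdB]
      intro k hk
      have h0 : sB B (∑ k ∈ Bᶜ, c k • (Pi.single k (1:ℝ) : Fin N → ℝ)) = 0 := by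
        apply hsB0
        intro j hj
        rw [hsum, if_pos hj]
      rw [h0, map_zero, hsum, if_neg hk]
      exact hc k hk
  · rw [Fintype.linearIndependent_iff]
    intro g hg i
    set a : Fin N → ℝ := fun k => if h : k ∈ B then 0 else g ⟨k, h⟩ with ha
    have hrw : ∑ k ∈ Bᶜ, a k • φ k = ∑ i : {k : Fin N // k ∉ B}, g i • φ i.1 := by
      rw [Finset.sum_subtype Bᶜ (fun x => Finset.mem_compl) (fun k => a k • φ k)]
      refine Finset.sum_congr rfl fun i _ => ?_
      show (if h : (i : Fin N) ∈ B then (0:ℝ) else g ⟨i, h⟩) • φ i.1 = g i • φ i.1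
      rw [dif_neg i.2]
    have hv : (∑ k ∈ Bᶜ, a k • (Pi.single k (1:ℝ) : Fin N → ℝ)) ∈ LinearMap.range μmap := by
      rw [← Submodule.Quotient.mk_eq_zero, ← Submodule.mkQ_apply, hπsum, hrw, hg]
    obtain ⟨x, hx⟩ := hv
    have hx0 : x = 0 := by
      apply hzero
      intro j hj
      have hxj := congrFun hx j
      rw [hμmap] at hxj
      rw [hxj, hsum, if_pos hj]
    rw [hx0, map_zero] at hx
    have h0 := congrFun hx.symm i.1
    rw [hsum, if_neg i.2, Pi.zero_apply] at h0
    rw [ha] at h0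
    simpa [dif_neg i.2] using h0
end
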